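/- arXiv:2110.12453 — 8 statements merged into one kernel-verified Lean document; each statement's English description precedes it below -/
import Mathlib

section
/- A bounded linear operator S on L²(𝕋) commutes with M_{z²} if and only if there exist φ_1, φ_2 ∈ L^∞(𝕋) such that Sf = φ_1 f^e + φ_2 f^o for all f ∈ L²(𝕋), where f^e(z) = (f(z)+f(−z))/2 and f^o(z) = (f(z)−f(−z))/2. -/
open MeasureTheory Complex
open scoped Real

noncomputable section

instance : Fact (0 < 2 * Real.pi) := ⟨by positivity⟩

/-- The circle group, modeled as `ℝ / 2πℤ`. -/
abbrev UnitCircle := AddCircle (2 * Real.pi)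

/-- Normalized Lebesgue (Haar) measure on the circle. -/
abbrev hm : Measure UnitCircle := AddCircle.haarAddCircle

/-- `L²(𝕋)`. -/
abbrev L2T := Lp ℂ 2 hm

/-- The coordinate function `z` on the circle. -/
def zz : UnitCircle → ℂ := fun x => fourier 1 x

/-- The Hardy space `H²` inside `L²(𝕋)`: the closed span of `{z^n : n ≥ 0}`. -/
def Hardy : Submodule ℂ L2T :=
  (Submodule.span ℂ (Set.range fun n : ℕ => fourierLp 2 (n : ℤ))).topologicalClosure

/-- even part `f^e(z) = (f(z)+f(-z))/2` (`-z` corresponds to `x + π`). -/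
def evenPart (g : UnitCircle → ℂ) : UnitCircle → ℂ :=
  fun x => (g x + g (x + ((Real.pi : ℝ) : UnitCircle))) / 2

/-- odd part `f^o(z) = (f(z)-f(-z))/2`. -/
def oddPart (g : UnitCircle → ℂ) : UnitCircle → ℂ :=
  fun x => (g x - g (x + ((Real.pi : ℝ) : UnitCircle))) / 2

/-- A conjugation on `L²(𝕋)`: an antilinear involutive map with `⟪Cf, Cg⟫ = ⟪g, f⟫`. -/
structure IsConjugation (C : L2T → L2T) : Prop where
  map_add : ∀ f g, C (f + g) = C f + C g
  map_smul : ∀ (c : ℂ) (f), C (c • f) = (starRingEnd ℂ) c • C f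
  involutive : ∀ f, C (C f) = f
  inner_eq : ∀ f g, (inner ℂ (C f) (C g) : ℂ) = inner ℂ g f

/-- the subspace `θ^k · S` of `L²(𝕋)` (given as the span of the set of elements
a.e. equal to `θ^k f` with `f ∈ S`; this set is already a subspace). -/
def mulSub (θ : UnitCircle → ℂ) (k : ℤ) (S : Submodule ℂ L2T) : Submodule ℂ L2T :=
  Submodule.span ℂ {g : L2T | ∃ f ∈ S,
    (g : UnitCircle → ℂ) =ᵐ[hm] fun x => θ x ^ k * (f : UnitCircle → ℂ) x}

/-- `θ` is inner: `θ ∈ L²` with `|θ| = 1` a.e. and `θ ∈ H²`. -/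
def IsInner (θ : UnitCircle → ℂ) : Prop :=
  ∃ hθ : MemLp θ 2 hm, (∀ᵐ x ∂hm, ‖θ x‖ = 1) ∧ hθ.toLp θ ∈ Hardy

/-- The model space `K_θ = H² ⊖ θH²`. -/
def modelSpace (θ : UnitCircle → ℂ) : Submodule ℂ L2T :=
  Hardy ⊓ (mulSub θ 1 Hardy)ᗮ

/-- The operator `M_{[φ₁,φ₂]}` applied to a function: `φ₁ g^e + φ₂ g^o`. -/
def mul2 (φ1 φ2 g : UnitCircle → ℂ) : UnitCircle → ℂ :=
  fun x => φ1 x * evenPart g x + φ2 x * oddPart g x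

/-- `J* f (z) = conj (f (z̄))`; `z̄` corresponds to `-x`. -/
def jstar (f : UnitCircle → ℂ) : UnitCircle → ℂ :=
  fun y => (starRingEnd ℂ) (f (-y))

/-- Finite Blaschke product with zeros `lam 0, …, lam (n-1)`. -/
def blaschke (n : ℕ) (lam : Fin n → ℂ) : UnitCircle → ℂ :=
  fun x => ∏ k, (lam k - zz x) / (1 - (starRingEnd ℂ) (lam k) * zz x)

/-- The standard basis functions `e_j` of the model space `K_B`. -/
def blaschkeBasis (n : ℕ) (lam : Fin n → ℂ) (j : Fin n) : UnitCircle → ℂ :=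
  fun x => (∏ k ∈ Finset.univ.filter (fun k : Fin n => (k : ℕ) < (j : ℕ)),
      (lam k - zz x) / (1 - (starRingEnd ℂ) (lam k) * zz x)) *
    ((Real.sqrt (1 - ‖lam j‖ ^ 2) : ℂ) / (1 - (starRingEnd ℂ) (lam j) * zz x))

namespace Stmt8
open scoped ENNReal NNReal
open Filter

local notation "pp" => ((Real.pi : ℝ) : UnitCircle)

lemma pp_add_pp : pp + pp = (0 : UnitCircle) := by
  rw [← QuotientAddGroup.mk_add]
  rw [show (Real.pi + Real.pi : ℝ) = 2 * Real.pi by ring]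
  exact AddCircle.coe_period (2 * Real.pi)

lemma zz_ne_zero (x : UnitCircle) : zz x ≠ 0 := by
  simp [zz, fourier_apply]

lemma norm_zz (x : UnitCircle) : ‖zz x‖ = 1 := by
  simp [zz, fourier_apply, Circle.norm_coe]

lemma fourier_add_arg (n : ℤ) (x y : UnitCircle) :
    fourier n (x + y) = fourier n x * fourier n y := by
  rw [fourier_apply, fourier_apply, fourier_apply, smul_add, AddCircle.toCircle_add]
  simp

lemma fourier_pi (n : ℤ) :
    (fourier n pp : ℂ) = if Even n then 1 else -1 := by
  rw [show (fourier n pp : ℂ)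
      = Complex.exp (2 * Real.pi * Complex.I * n * Real.pi / ((2 * Real.pi : ℝ) : ℂ))
    from fourier_coe_apply]
  push_cast
  have hpi : (Real.pi : ℂ) ≠ 0 := by exact_mod_cast Real.pi_ne_zero
  have harg : 2 * (Real.pi : ℂ) * Complex.I * n * Real.pi / (2 * Real.pi)
      = n * (Real.pi * Complex.I) := by field_simp
  rw [harg]
  rcases Int.even_or_odd n with ⟨m, hme⟩ | ⟨m, hmo⟩
  · subst hme
    rw [if_pos ⟨m, rfl⟩]
    push_cast
    rw [show ((m : ℂ) + m) * (Real.pi * Complex.I) = m * (2 * Real.pi * Complex.I) by ring]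
    exact Complex.exp_int_mul_two_pi_mul_I m
  · subst hmo
    rw [if_neg (by simp [Int.even_add_one, parity_simps])]
    push_cast
    rw [show (2 * (m : ℂ) + 1) * (Real.pi * Complex.I)
        = m * (2 * Real.pi * Complex.I) + Real.pi * Complex.I by ring]
    rw [Complex.exp_add, Complex.exp_int_mul_two_pi_mul_I, Complex.exp_pi_mul_I]
    ring

lemma fourier_shift (n : ℤ) (x : UnitCircle) :
    fourier n (x + pp) = (if Even n then 1 else -1) * fourier n x := by
  rw [fourier_add_arg, fourier_pi, mul_comm]


lemma mp_shift : MeasurePreserving (fun x : UnitCircle => x + pp) hm hm :=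
  measurePreserving_add_right hm pp

lemma ae_shift {P : UnitCircle → Prop} (h : ∀ᵐ x ∂hm, P x) :
    ∀ᵐ x ∂hm, P (x + pp) := by
  rw [Filter.eventually_iff, mem_ae_iff] at h ⊢
  have : {x : UnitCircle | ¬ P (x + pp)}
      = (fun x : UnitCircle => x + pp) ⁻¹' {x | ¬ P x} := rfl
  rw [show {x : UnitCircle | P (x + pp)}ᶜ = (fun x : UnitCircle => x + pp) ⁻¹' {x | P x}ᶜ
    from rfl]
  exact mp_shift.quasiMeasurePreserving.preimage_null h

lemma evenPart_congr {g g' : UnitCircle → ℂ} (h : g =ᵐ[hm] g') :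
    evenPart g =ᵐ[hm] evenPart g' := by
  filter_upwards [h, ae_shift (P := fun x => g x = g' x) h] with x h1 h2
  simp only [evenPart, h1, h2]

lemma oddPart_congr {g g' : UnitCircle → ℂ} (h : g =ᵐ[hm] g') :
    oddPart g =ᵐ[hm] oddPart g' := by
  filter_upwards [h, ae_shift (P := fun x => g x = g' x) h] with x h1 h2
  simp only [oddPart, h1, h2]

lemma mul2_congr (φ1 φ2 : UnitCircle → ℂ) {g g' : UnitCircle → ℂ} (h : g =ᵐ[hm] g') :
    mul2 φ1 φ2 g =ᵐ[hm] mul2 φ1 φ2 g' := by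
  filter_upwards [evenPart_congr h, oddPart_congr h] with x h1 h2
  simp only [mul2, h1, h2]

lemma mul2_sum (φ1 φ2 : UnitCircle → ℂ) {ι : Type*} (F : Finset ι)
    (g : ι → UnitCircle → ℂ) (c : ι → ℂ) :
    mul2 φ1 φ2 (fun x => ∑ i ∈ F, c i • g i x)
      = fun x => ∑ i ∈ F, c i • mul2 φ1 φ2 (g i) x := by
  funext x
  simp only [mul2, evenPart, oddPart, smul_eq_mul, ← Finset.sum_add_distrib,
    ← Finset.sum_sub_distrib, Finset.sum_div, Finset.mul_sum]
  exact Finset.sum_congr rfl fun i _ => by ring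


lemma coeFn_sum {ι : Type*} (F : Finset ι) (h : ι → L2T) :
    ⇑(∑ i ∈ F, h i) =ᵐ[hm] fun x => ∑ i ∈ F, (h i : UnitCircle → ℂ) x := by
  classical
  induction F using Finset.induction_on with
  | empty => simp only [Finset.sum_empty]; exact Lp.coeFn_zero ℂ 2 hm
  | insert a s hnotmem ih =>
    rw [Finset.sum_insert hnotmem]
    filter_upwards [Lp.coeFn_add (h a) (∑ i ∈ s, h i), ih] with x h1 h2
    rw [h1]
    simp only [Pi.add_apply, h2, Finset.sum_insert hnotmem]

lemma exists_ae_tendsto (u : ℕ → L2T) (g : L2T) (h : Filter.Tendsto u Filter.atTop (nhds g)) :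
    ∃ κ : ℕ → ℕ, StrictMono κ ∧ ∀ᵐ x ∂hm,
      Filter.Tendsto (fun k => (u (κ k) : UnitCircle → ℂ) x) Filter.atTop
        (nhds ((g : UnitCircle → ℂ) x)) := by
  have hnorm : Filter.Tendsto (fun k => ‖u k - g‖) Filter.atTop (nhds 0) := by
    rw [← tendsto_iff_norm_sub_tendsto_zero] at *; exact h
  have help : Filter.Tendsto (fun k => eLpNorm ((u k : UnitCircle → ℂ) - ⇑g) 2 hm)
      Filter.atTop (nhds 0) := by
    have heq : ∀ k, eLpNorm ((u k : UnitCircle → ℂ) - ⇑g) 2 hm = ENNReal.ofReal ‖u k - g‖ := by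
      intro k
      rw [← eLpNorm_congr_ae (Lp.coeFn_sub (u k) g), Lp.norm_def,
        ENNReal.ofReal_toReal (Lp.eLpNorm_ne_top _)]
    simp only [heq]
    rw [show (0 : ℝ≥0∞) = ENNReal.ofReal 0 by simp]
    exact (ENNReal.continuous_ofReal.tendsto 0).comp hnorm
  have htim : TendstoInMeasure hm (fun k => (u k : UnitCircle → ℂ)) Filter.atTop ⇑g :=
    tendstoInMeasure_of_tendsto_eLpNorm_of_ne_top two_ne_zero ENNReal.ofNat_ne_top
      (fun k => Lp.aestronglyMeasurable _) (Lp.aestronglyMeasurable _) help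
  exact htim.exists_seq_tendsto_ae

lemma lintegral_sq_eq (f : UnitCircle → ℂ) :
    ∫⁻ x, (‖f x‖₊ : ℝ≥0∞) ^ 2 ∂hm = (eLpNorm f 2 hm) ^ 2 := by
  rw [eLpNorm_eq_lintegral_rpow_enorm_toReal two_ne_zero ENNReal.ofNat_ne_top]
  rw [← ENNReal.rpow_natCast _ 2, ← ENNReal.rpow_mul]
  norm_num
  rfl


lemma test_bound (S : L2T →L[ℂ] L2T) {ψ h : UnitCircle → ℂ} (hh : MemLp h 2 hm)
    (hSh : ⇑(S (hh.toLp h)) =ᵐ[hm] fun x => ψ x * h x) :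
    ∫⁻ x, (‖ψ x * h x‖₊ : ℝ≥0∞) ^ 2 ∂hm
      ≤ ENNReal.ofReal (‖S‖ ^ 2) * ∫⁻ x, (‖h x‖₊ : ℝ≥0∞) ^ 2 ∂hm := by
  set G := hh.toLp h with hG
  have hel : eLpNorm (⇑G) 2 hm = eLpNorm h 2 hm := eLpNorm_congr_ae (MemLp.coeFn_toLp hh)
  have h1 : eLpNorm (⇑(S G)) 2 hm ≤ ENNReal.ofReal ‖S‖ * eLpNorm h 2 hm := by
    have hb : ‖S G‖ ≤ ‖S‖ * ‖G‖ := S.le_opNorm G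
    rw [Lp.norm_def, Lp.norm_def, hel] at hb
    calc eLpNorm (⇑(S G)) 2 hm
        = ENNReal.ofReal ((eLpNorm (⇑(S G)) 2 hm).toReal) :=
          (ENNReal.ofReal_toReal (Lp.eLpNorm_ne_top _)).symm
      _ ≤ ENNReal.ofReal (‖S‖ * (eLpNorm h 2 hm).toReal) := ENNReal.ofReal_le_ofReal hb
      _ = ENNReal.ofReal ‖S‖ * ENNReal.ofReal ((eLpNorm h 2 hm).toReal) :=
          ENNReal.ofReal_mul (norm_nonneg S)
      _ = ENNReal.ofReal ‖S‖ * eLpNorm h 2 hm := by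
          rw [ENNReal.ofReal_toReal (hh.eLpNorm_ne_top)]
  calc ∫⁻ x, (‖ψ x * h x‖₊ : ℝ≥0∞) ^ 2 ∂hm
      = ∫⁻ x, (‖(S G : UnitCircle → ℂ) x‖₊ : ℝ≥0∞) ^ 2 ∂hm := by
        refine lintegral_congr_ae ?_
        filter_upwards [hSh] with x hx
        rw [hx]
    _ = (eLpNorm (⇑(S G)) 2 hm) ^ 2 := lintegral_sq_eq _
    _ ≤ (ENNReal.ofReal ‖S‖ * eLpNorm h 2 hm) ^ 2 := by
        exact pow_le_pow_left' h1 2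
    _ = ENNReal.ofReal (‖S‖ ^ 2) * (eLpNorm h 2 hm) ^ 2 := by
        rw [mul_pow, ← ENNReal.ofReal_pow (norm_nonneg S)]
    _ = ENNReal.ofReal (‖S‖ ^ 2) * ∫⁻ x, (‖h x‖₊ : ℝ≥0∞) ^ 2 ∂hm := by
        rw [lintegral_sq_eq]

lemma bound_lemma {φ : UnitCircle → ℂ} (hφ : AEStronglyMeasurable φ hm) (c : ℝ) (hc : 0 ≤ c)
    (key : ∀ A : Set UnitCircle, MeasurableSet A →
      ∫⁻ x in A, (‖φ x‖₊ : ℝ≥0∞) ^ 2 ∂hm ≤ ENNReal.ofReal c * hm A) :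
    MemLp φ ⊤ hm := by
  set φ' := hφ.mk φ with hφ'
  have hae : φ =ᵐ[hm] φ' := hφ.ae_eq_mk
  set s := Real.sqrt c with hs
  have hsnn : 0 ≤ s := Real.sqrt_nonneg c
  set A : ℕ → Set UnitCircle := fun n => {x | s + 1 / (n + 1) ≤ ‖φ' x‖} with hA
  have hmeasA : ∀ n, MeasurableSet (A n) := by
    intro n
    exact measurableSet_le measurable_const hφ.stronglyMeasurable_mk.measurable.norm
  have hA0 : ∀ n, hm (A n) = 0 := by
    intro n
    by_contra h0
    set ε : ℝ := 1 / (n + 1 : ℝ) with hε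
    have hεpos : 0 < ε := by positivity
    have hlow : ENNReal.ofReal ((s + ε) ^ 2) * hm (A n)
        ≤ ∫⁻ x in A n, (‖φ x‖₊ : ℝ≥0∞) ^ 2 ∂hm := by
      have : ∫⁻ x in A n, (‖φ x‖₊ : ℝ≥0∞) ^ 2 ∂hm
          = ∫⁻ x in A n, (‖φ' x‖₊ : ℝ≥0∞) ^ 2 ∂hm := by
        refine lintegral_congr_ae (ae_restrict_of_ae ?_)
        filter_upwards [hae] with x hx
        rw [hx]
      rw [this, ← MeasureTheory.setLIntegral_const]
      refine setLIntegral_mono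
        ((hφ.stronglyMeasurable_mk.measurable.nnnorm.coe_nnreal_ennreal).pow_const 2) ?_
      intro x hx
      have hx' : s + ε ≤ ‖φ' x‖ := hx
      rw [show ((‖φ' x‖₊ : ℝ≥0∞)) = ENNReal.ofReal ‖φ' x‖ from (ofReal_norm _).symm,
        ← ENNReal.ofReal_pow (norm_nonneg _)]
      exact ENNReal.ofReal_le_ofReal (by nlinarith [norm_nonneg (φ' x)])
    have hup := key (A n) (hmeasA n)
    have hcomb : ENNReal.ofReal ((s + ε) ^ 2) * hm (A n) ≤ ENNReal.ofReal c * hm (A n) :=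
      le_trans hlow hup
    have hne : hm (A n) ≠ ⊤ := measure_ne_top hm _
    have := (ENNReal.mul_le_mul_iff_left h0 hne).mp hcomb
    rw [ENNReal.ofReal_le_ofReal_iff hc] at this
    have hs2 : s ^ 2 = c := Real.sq_sqrt hc
    nlinarith
  have hbd : ∀ᵐ x ∂hm, ‖φ x‖ ≤ s := by
    have h1 : ∀ᵐ x ∂hm, ‖φ' x‖ ≤ s := by
      rw [Filter.eventually_iff, mem_ae_iff]
      refine measure_mono_null ?_ (measure_iUnion_null hA0)
      intro x hx
      simp only [Set.mem_compl_iff, Set.mem_setOf_eq, not_le] at hx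
      obtain ⟨n, hn⟩ := exists_nat_one_div_lt (show 0 < ‖φ' x‖ - s by linarith)
      exact Set.mem_iUnion.mpr ⟨n, by simp only [A, Set.mem_setOf_eq]; push_cast; linarith⟩
    filter_upwards [hae, h1] with x hx h1x
    rw [hx]; exact h1x
  exact memLp_top_of_bound hφ s hbd


lemma fourier_ne_zero (n : ℤ) (x : UnitCircle) : (fourier n x : ℂ) ≠ 0 := by
  simp [fourier_apply]

lemma mul2_fourier (φ1 φ2 : UnitCircle → ℂ) (n : ℤ) :
    mul2 φ1 φ2 (⇑(fourier n)) = fun x => fourier n x * (if Even n then φ1 x else φ2 x) := by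
  funext x
  by_cases hn : Even n
  · simp only [mul2, evenPart, oddPart, fourier_shift, if_pos hn, one_mul]
    ring
  · simp only [mul2, evenPart, oddPart, fourier_shift, if_neg hn, neg_one_mul]
    ring

section Op

variable (Mz2 : L2T →L[ℂ] L2T)
  (hMz2 : ∀ f : L2T, (Mz2 f : UnitCircle → ℂ) =ᵐ[hm]
    fun x => zz x ^ 2 * (f : UnitCircle → ℂ) x)

include hMz2

lemma claimA : ∀ (k : ℕ) (f : L2T),
    ⇑((Mz2 ^ k) f) =ᵐ[hm] fun x => fourier (2 * (k : ℤ)) x * (f : UnitCircle → ℂ) x := by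
  intro k
  induction k with
  | zero =>
    intro f
    simp only [pow_zero, ContinuousLinearMap.one_apply, Nat.cast_zero, mul_zero]
    filter_upwards with x
    rw [fourier_zero, one_mul]
  | succ k ih =>
    intro f
    have hps : (Mz2 ^ (k + 1)) f = (Mz2 ^ k) (Mz2 f) := by
      rw [pow_succ, ContinuousLinearMap.mul_apply]
    rw [hps]
    filter_upwards [ih (Mz2 f), hMz2 f] with x h1 h2
    rw [h1, h2]
    have hz2 : zz x ^ 2 = fourier 2 x := by
      rw [show (2 : ℤ) = 1 + 1 from rfl, fourier_add, sq]
      rfl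
    have hc : (2 * ((k + 1 : ℕ) : ℤ)) = 2 * (k : ℤ) + 2 := by push_cast; ring
    rw [hz2, hc, fourier_add]
    ring

lemma claimShift (k : ℕ) (n : ℤ) :
    (Mz2 ^ k) (fourierLp 2 n : L2T) = (fourierLp 2 (n + 2 * k) : L2T) := by
  refine Lp.ext ?_
  filter_upwards [claimA Mz2 hMz2 k (fourierLp 2 n), coeFn_fourierLp 2 n,
    coeFn_fourierLp 2 (n + 2 * k)] with x h1 h2 h3
  rw [h1, h2, h3, ← fourier_add]
  congr 1
  ring

variable (S : L2T →L[ℂ] L2T) (hcomm : ∀ f, S (Mz2 f) = Mz2 (S f))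

include hcomm

lemma hcommpow : ∀ (k : ℕ) (f : L2T), S ((Mz2 ^ k) f) = (Mz2 ^ k) (S f) := by
  intro k
  induction k with
  | zero => intro f; simp
  | succ k ih =>
    intro f
    rw [pow_succ, ContinuousLinearMap.mul_apply, ContinuousLinearMap.mul_apply, ih (Mz2 f),
      hcomm f]

lemma hkey (n : ℤ) :
    ⇑(S (fourierLp 2 n)) =ᵐ[hm] fun x => fourier n x *
      (if Even n then (S (fourierLp 2 0) : UnitCircle → ℂ) x
       else (zz x)⁻¹ * (S (fourierLp 2 1) : UnitCircle → ℂ) x) := by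
  rcases Int.even_or_odd n with ⟨m, hme⟩ | ⟨m, hmo⟩
  · have hev : Even n := ⟨m, hme⟩
    rcases le_or_gt 0 m with hc | hc
    · set k := m.toNat with hk
      have hkm : (k : ℤ) = m := Int.toNat_of_nonneg hc
      have hsh : (fourierLp 2 n : L2T) = (Mz2 ^ k) (fourierLp 2 0) := by
        rw [claimShift Mz2 hMz2 k 0, zero_add, show 2 * (k : ℤ) = n by rw [hkm]; omega]
      rw [hsh, hcommpow Mz2 hMz2 S hcomm]
      filter_upwards [claimA Mz2 hMz2 k (S (fourierLp 2 0))] with x h1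
      rw [h1, if_pos hev, hkm, show n = 2 * m by omega]
    · set k := (-m).toNat with hk
      have hkm : (k : ℤ) = -m := Int.toNat_of_nonneg (by omega)
      have hsh : (fourierLp 2 0 : L2T) = (Mz2 ^ k) (fourierLp 2 n) := by
        rw [claimShift Mz2 hMz2 k n, show n + 2 * (k : ℤ) = 0 by rw [hkm]; omega]
      have h2 : S (fourierLp 2 0) = (Mz2 ^ k) (S (fourierLp 2 n)) := by
        rw [hsh, hcommpow Mz2 hMz2 S hcomm]
      filter_upwards [claimA Mz2 hMz2 k (S (fourierLp 2 n))] with x h1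
      rw [if_pos hev]
      have heq : (S (fourierLp 2 0) : UnitCircle → ℂ) x
          = fourier (2 * (k : ℤ)) x * (S (fourierLp 2 n) : UnitCircle → ℂ) x := by
        rw [h2]; exact h1
      apply mul_left_cancel₀ (fourier_ne_zero (2 * (k : ℤ)) x)
      rw [← heq, ← mul_assoc, ← fourier_add, show 2 * (k : ℤ) + n = 0 by omega, fourier_zero,
        one_mul]
  · have hodd : ¬ Even n := by rw [hmo]; simp [Int.even_add_one, parity_simps]
    rcases le_or_gt 0 m with hc | hc
    · set k := m.toNat with hk
      have hkm : (k : ℤ) = m := Int.toNat_of_nonneg hc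
      have hsh : (fourierLp 2 n : L2T) = (Mz2 ^ k) (fourierLp 2 1) := by
        rw [claimShift Mz2 hMz2 k 1, show 1 + 2 * (k : ℤ) = n by rw [hkm]; omega]
      rw [hsh, hcommpow Mz2 hMz2 S hcomm]
      filter_upwards [claimA Mz2 hMz2 k (S (fourierLp 2 1))] with x h1
      rw [h1, if_neg hodd]
      have hzz : (zz x : ℂ) = fourier 1 x := rfl
      rw [← mul_assoc, hzz]
      rw [show n = 2 * (k : ℤ) + 1 by rw [hkm]; omega, fourier_add]
      field_simp [fourier_ne_zero 1 x]
    · set k := (-m).toNat with hk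
      have hkm : (k : ℤ) = -m := Int.toNat_of_nonneg (by omega)
      have hsh : (fourierLp 2 1 : L2T) = (Mz2 ^ k) (fourierLp 2 n) := by
        rw [claimShift Mz2 hMz2 k n, show n + 2 * (k : ℤ) = 1 by rw [hkm]; omega]
      have h2 : S (fourierLp 2 1) = (Mz2 ^ k) (S (fourierLp 2 n)) := by
        rw [hsh, hcommpow Mz2 hMz2 S hcomm]
      filter_upwards [claimA Mz2 hMz2 k (S (fourierLp 2 n))] with x h1
      rw [if_neg hodd]
      have heq : (S (fourierLp 2 1) : UnitCircle → ℂ) x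
          = fourier (2 * (k : ℤ)) x * (S (fourierLp 2 n) : UnitCircle → ℂ) x := by
        rw [h2]; exact h1
      apply mul_left_cancel₀ (fourier_ne_zero (2 * (k : ℤ)) x)
      rw [← heq]
      have hzz : (zz x : ℂ) = fourier 1 x := rfl
      rw [hzz, show (fourier (2 * (k : ℤ)) x : ℂ) * (fourier n x *
          ((fourier 1 x)⁻¹ * (S (fourierLp 2 1) : UnitCircle → ℂ) x))
        = (fourier (2 * (k : ℤ)) x * fourier n x) *
          ((fourier 1 x)⁻¹ * (S (fourierLp 2 1) : UnitCircle → ℂ) x) by ring,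
        ← fourier_add, show 2 * (k : ℤ) + n = 1 by omega]
      field_simp [fourier_ne_zero 1 x]


lemma main_rep (f : L2T) :
    ⇑(S f) =ᵐ[hm] mul2 (fun x => (S (fourierLp 2 0) : UnitCircle → ℂ) x)
      (fun x => (zz x)⁻¹ * (S (fourierLp 2 1) : UnitCircle → ℂ) x) ⇑f := by
  classical
  set φ1 : UnitCircle → ℂ := fun x => (S (fourierLp 2 0) : UnitCircle → ℂ) x with hφ1
  set φ2 : UnitCircle → ℂ := fun x => (zz x)⁻¹ * (S (fourierLp 2 1) : UnitCircle → ℂ) x with hφ2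
  set c : ℤ → ℂ := fun i => fourierBasis.repr f i with hc
  have hHS : HasSum (fun i : ℤ => c i • (fourierLp 2 i : L2T)) f := by
    have h0 := (@fourierBasis (2 * Real.pi) _).hasSum_repr f
    have hfun : (fun i : ℤ => c i • (fourierLp 2 i : L2T))
        = fun i => fourierBasis.repr f i • fourierBasis i := by
      funext i
      congr 1
      exact (congrFun coe_fourierBasis i).symm
    rw [hfun]
    exact h0
  set FS : ℕ → Finset ℤ := fun k => Finset.Icc (-(k : ℤ)) k with hFS
  have hFSmono : Monotone FS := fun a b hab =>
    Finset.Icc_subset_Icc (by exact_mod_cast neg_le_neg (Int.ofNat_le.mpr hab))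
      (by exact_mod_cast hab)
  have hFStop : Filter.Tendsto FS Filter.atTop Filter.atTop :=
    tendsto_atTop_finset_of_monotone hFSmono
      (fun i => ⟨i.natAbs, by simp only [FS, Finset.mem_Icc]; omega⟩)
  set q : ℕ → L2T := fun k => ∑ i ∈ FS k, c i • (fourierLp 2 i : L2T) with hqdef
  have hq : Filter.Tendsto q Filter.atTop (nhds f) := hHS.comp hFStop
  set u : ℕ → L2T := fun k => S (q k) with hudef
  have hu : Filter.Tendsto u Filter.atTop (nhds (S f)) := (S.continuous.tendsto f).comp hq
  obtain ⟨κ1, hκ1, hae1⟩ := exists_ae_tendsto u (S f) hu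
  have hq1 : Filter.Tendsto (fun k => q (κ1 k)) Filter.atTop (nhds f) :=
    hq.comp hκ1.tendsto_atTop
  obtain ⟨κ2, hκ2, hae2⟩ := exists_ae_tendsto (fun k => q (κ1 k)) f hq1
  set κ : ℕ → ℕ := fun k => κ1 (κ2 k) with hκ
  have haeu : ∀ᵐ x ∂hm, Filter.Tendsto (fun k => (u (κ k) : UnitCircle → ℂ) x)
      Filter.atTop (nhds ((S f : UnitCircle → ℂ) x)) := by
    filter_upwards [hae1] with x hx
    exact hx.comp hκ2.tendsto_atTop
  have haeq : ∀ᵐ x ∂hm, Filter.Tendsto (fun k => (q (κ k) : UnitCircle → ℂ) x)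
      Filter.atTop (nhds ((f : UnitCircle → ℂ) x)) := hae2
  set p : ℕ → UnitCircle → ℂ := fun k x => ∑ i ∈ FS k, c i • fourier i x with hp
  have hqp : ∀ᵐ x ∂hm, ∀ k, (q k : UnitCircle → ℂ) x = p k x := by
    rw [MeasureTheory.ae_all_iff]
    intro k
    have h3 : ∀ᵐ x ∂hm, ∀ i : ℤ, i ∈ FS k →
        ⇑(c i • (fourierLp 2 i : L2T)) x = c i • fourier i x := by
      rw [MeasureTheory.ae_all_iff]
      intro i
      filter_upwards [Lp.coeFn_smul (c i) (fourierLp 2 i : L2T), coeFn_fourierLp 2 i]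
        with x h1 h2
      intro _
      rw [h1, Pi.smul_apply, h2]
    filter_upwards [coeFn_sum (FS k) (fun i => c i • (fourierLp 2 i : L2T)), h3] with x h1 h2
    rw [h1]
    exact Finset.sum_congr rfl fun i hi => h2 i hi
  have hup : ∀ᵐ x ∂hm, ∀ k, (u k : UnitCircle → ℂ) x = mul2 φ1 φ2 (p k) x := by
    rw [MeasureTheory.ae_all_iff]
    intro k
    have h1 : u k = ∑ i ∈ FS k, c i • S (fourierLp 2 i) := by
      simp only [u, q, _root_.map_sum]
      exact Finset.sum_congr rfl fun i _ => _root_.map_smul S (c i) _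
    have h3 : ∀ᵐ x ∂hm, ∀ i : ℤ, i ∈ FS k →
        ⇑(c i • S (fourierLp 2 i)) x = c i • (fourier i x *
          (if Even i then φ1 x else φ2 x)) := by
      rw [MeasureTheory.ae_all_iff]
      intro i
      filter_upwards [Lp.coeFn_smul (c i) (S (fourierLp 2 i)),
        hkey Mz2 hMz2 S hcomm i] with x ha hb
      intro _
      rw [ha, Pi.smul_apply, hb]
    rw [h1]
    filter_upwards [coeFn_sum (FS k) (fun i => c i • S (fourierLp 2 i)), h3] with x ha hb
    rw [ha, hp]
    rw [mul2_sum φ1 φ2 (FS k) (fun i => ⇑(fourier i)) c]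
    refine Finset.sum_congr rfl fun i hi => ?_
    rw [hb i hi, mul2_fourier φ1 φ2 i]
  filter_upwards [haeu, haeq, ae_shift (P := fun x => Filter.Tendsto
      (fun k => (q (κ k) : UnitCircle → ℂ) x) Filter.atTop (nhds ((f : UnitCircle → ℂ) x))) haeq,
    hqp, ae_shift (P := fun x => ∀ k, (q k : UnitCircle → ℂ) x = p k x) hqp, hup]
    with x h1 h2 h3 h4 h5 h6
  have hT1 : Filter.Tendsto (fun k => mul2 φ1 φ2 (p (κ k)) x) Filter.atTop
      (nhds ((S f : UnitCircle → ℂ) x)) := by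
    refine h1.congr fun k => ?_
    exact h6 (κ k)
  have hpx : Filter.Tendsto (fun k => p (κ k) x) Filter.atTop
      (nhds ((f : UnitCircle → ℂ) x)) := h2.congr fun k => h4 (κ k)
  have hpx' : Filter.Tendsto (fun k => p (κ k) (x + pp)) Filter.atTop
      (nhds ((f : UnitCircle → ℂ) (x + pp))) := h3.congr fun k => h5 (κ k)
  have hT2 : Filter.Tendsto (fun k => mul2 φ1 φ2 (p (κ k)) x) Filter.atTop
      (nhds (mul2 φ1 φ2 (⇑f) x)) := by
    simp only [mul2, evenPart, oddPart]
    exact (((hpx.add hpx').div_const 2).const_mul (φ1 x)).add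
      (((hpx.sub hpx').div_const 2).const_mul (φ2 x))
  exact tendsto_nhds_unique hT1 hT2

end Op

section Keys

variable (S : L2T →L[ℂ] L2T) (φ1 φ2 : UnitCircle → ℂ)
  (hrep : ∀ f : L2T, ⇑(S f) =ᵐ[hm] mul2 φ1 φ2 ⇑f)
  (A : Set UnitCircle) (hA : MeasurableSet A)

include hrep hA

lemma key_both :
    (∫⁻ x in A, (‖φ1 x‖₊ : ℝ≥0∞) ^ 2 ∂hm ≤ ENNReal.ofReal (2 * ‖S‖ ^ 2) * hm A) ∧
    (∫⁻ x in A, (‖φ2 x‖₊ : ℝ≥0∞) ^ 2 ∂hm ≤ ENNReal.ofReal (2 * ‖S‖ ^ 2) * hm A) := by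
  set B := A ∪ (fun x => x + pp) ⁻¹' A with hB
  have hBmeas : MeasurableSet B := hA.union ((measurable_add_const pp) hA)
  have hBshift : ∀ x, (x + pp ∈ B) ↔ x ∈ B := by
    intro x
    have h2 : x + pp + pp = x := by rw [add_assoc, pp_add_pp, add_zero]
    simp only [B, Set.mem_union, Set.mem_preimage, h2]
    tauto
  have hBA : hm B ≤ 2 * hm A := by
    refine le_trans (measure_union_le _ _) ?_
    rw [mp_shift.measure_preimage hA.nullMeasurableSet]
    exact le_of_eq (two_mul _).symm
  set g : UnitCircle → ℂ := B.indicator (fun _ => 1) with hg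
  have hgshift : ∀ x, g (x + pp) = g x := by
    intro x
    rw [hg]
    by_cases hx : x ∈ B
    · rw [Set.indicator_of_mem ((hBshift x).mpr hx), Set.indicator_of_mem hx]
    · rw [Set.indicator_of_notMem (fun h => hx ((hBshift x).mp h)),
        Set.indicator_of_notMem hx]
  have hgb : ∀ x, ‖g x‖ ≤ 1 := by
    intro x
    rw [hg]
    by_cases hx : x ∈ B
    · rw [Set.indicator_of_mem hx]; simp
    · rw [Set.indicator_of_notMem hx]; simp
  have hgone : ∀ x ∈ A, g x = 1 := by
    intro x hx
    rw [hg]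
    exact Set.indicator_of_mem (Set.mem_union_left _ hx) _
  have hgint : ∫⁻ x, (‖g x‖₊ : ℝ≥0∞) ^ 2 ∂hm = hm B := by
    have hpt : ∀ x, (‖g x‖₊ : ℝ≥0∞) ^ 2 = B.indicator (fun _ => (1 : ℝ≥0∞)) x := by
      intro x
      rw [hg]
      by_cases hx : x ∈ B
      · rw [show B.indicator (fun _ => (1:ℂ)) x = 1 from Set.indicator_of_mem hx _, Set.indicator_of_mem hx]; simp
      · rw [show B.indicator (fun _ => (1:ℂ)) x = 0 from Set.indicator_of_notMem hx _,
          Set.indicator_of_notMem hx]; simp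
    simp_rw [hpt]
    exact lintegral_indicator_one hBmeas
  have hfinal : ∀ ψ : UnitCircle → ℂ, (∀ x ∈ A, ‖ψ x‖₊ = ‖φ1 x‖₊ ∨ ‖ψ x‖₊ = ‖φ2 x‖₊) →
      True := fun _ _ => trivial
  constructor
  · -- φ1, even test function g
    have hgm : MemLp g 2 hm := by
      refine (memLp_top_of_bound ?_ 1 (Filter.Eventually.of_forall hgb)).mono_exponent
        le_top
      exact aestronglyMeasurable_const.indicator hBmeas
    have hSh : ⇑(S (hgm.toLp g)) =ᵐ[hm] fun x => φ1 x * g x := by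
      have h3 : mul2 φ1 φ2 g = fun x => φ1 x * g x := by
        funext x
        simp only [mul2, evenPart, oddPart, hgshift x]
        ring
      exact (hrep (hgm.toLp g)).trans ((mul2_congr φ1 φ2 (MemLp.coeFn_toLp hgm)).trans
        (by rw [h3]))
    have htb := test_bound S hgm hSh
    calc ∫⁻ x in A, (‖φ1 x‖₊ : ℝ≥0∞) ^ 2 ∂hm
        = ∫⁻ x in A, (‖φ1 x * g x‖₊ : ℝ≥0∞) ^ 2 ∂hm := by
          refine setLIntegral_congr_fun hA (fun x hx => ?_)
          rw [hgone x hx, mul_one]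
      _ ≤ ∫⁻ x, (‖φ1 x * g x‖₊ : ℝ≥0∞) ^ 2 ∂hm := setLIntegral_le_lintegral _ _
      _ ≤ ENNReal.ofReal (‖S‖ ^ 2) * ∫⁻ x, (‖g x‖₊ : ℝ≥0∞) ^ 2 ∂hm := htb
      _ ≤ ENNReal.ofReal (‖S‖ ^ 2) * (2 * hm A) := by
          rw [hgint]; exact mul_le_mul_right hBA _
      _ = ENNReal.ofReal (2 * ‖S‖ ^ 2) * hm A := by
          rw [ENNReal.ofReal_mul (by norm_num : (0:ℝ) ≤ 2)]
          rw [ENNReal.ofReal_ofNat]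
          ring
  · -- φ2, odd test function zz * g
    set h : UnitCircle → ℂ := fun x => zz x * g x with hh
    have hhshift : ∀ x, h (x + pp) = - h x := by
      intro x
      have hzz : zz (x + pp) = - zz x := by
        have := fourier_shift 1 x
        rw [if_neg (by decide)] at this
        simpa [zz] using this
      simp only [h, hzz, hgshift x]
      ring
    have hhb : ∀ x, ‖h x‖ ≤ 1 := by
      intro x
      rw [hh]
      simp only [norm_mul, norm_zz, one_mul]
      exact hgb x
    have hhm : MemLp h 2 hm := by
      refine (memLp_top_of_bound ?_ 1 (Filter.Eventually.of_forall hhb)).mono_exponent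
        le_top
      exact ((map_continuous (fourier 1)).aestronglyMeasurable).mul
        (aestronglyMeasurable_const.indicator hBmeas)
    have hSh : ⇑(S (hhm.toLp h)) =ᵐ[hm] fun x => φ2 x * h x := by
      have h3 : mul2 φ1 φ2 h = fun x => φ2 x * h x := by
        funext x
        simp only [mul2, evenPart, oddPart, hhshift x]
        ring
      exact (hrep (hhm.toLp h)).trans ((mul2_congr φ1 φ2 (MemLp.coeFn_toLp hhm)).trans
        (by rw [h3]))
    have htb := test_bound S hhm hSh
    have hhint : ∫⁻ x, (‖h x‖₊ : ℝ≥0∞) ^ 2 ∂hm = hm B := by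
      rw [← hgint]
      refine lintegral_congr fun x => ?_
      have : ‖h x‖₊ = ‖g x‖₊ := by
        simp only [h, nnnorm_mul]
        rw [show ‖zz x‖₊ = 1 from NNReal.coe_injective (by rw [coe_nnnorm, norm_zz, NNReal.coe_one]), one_mul]
      rw [this]
    calc ∫⁻ x in A, (‖φ2 x‖₊ : ℝ≥0∞) ^ 2 ∂hm
        = ∫⁻ x in A, (‖φ2 x * h x‖₊ : ℝ≥0∞) ^ 2 ∂hm := by
          refine setLIntegral_congr_fun hA (fun x hx => ?_)
          have : ‖φ2 x * h x‖₊ = ‖φ2 x‖₊ := by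
            simp only [h, nnnorm_mul, hgone x hx, nnnorm_one, mul_one]
            rw [show ‖zz x‖₊ = 1 from NNReal.coe_injective (by rw [coe_nnnorm, norm_zz, NNReal.coe_one]),
              mul_one]
          rw [this]
      _ ≤ ∫⁻ x, (‖φ2 x * h x‖₊ : ℝ≥0∞) ^ 2 ∂hm := setLIntegral_le_lintegral _ _
      _ ≤ ENNReal.ofReal (‖S‖ ^ 2) * ∫⁻ x, (‖h x‖₊ : ℝ≥0∞) ^ 2 ∂hm := htb
      _ ≤ ENNReal.ofReal (‖S‖ ^ 2) * (2 * hm A) := by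
          rw [hhint]; exact mul_le_mul_right hBA _
      _ = ENNReal.ofReal (2 * ‖S‖ ^ 2) * hm A := by
          rw [ENNReal.ofReal_mul (by norm_num : (0:ℝ) ≤ 2)]
          rw [ENNReal.ofReal_ofNat]
          ring

end Keys

lemma zz_shift (x : UnitCircle) : zz (x + pp) = - zz x := by
  have := fourier_shift 1 x
  rw [if_neg (by decide)] at this
  simpa [zz] using this

lemma mul2_shift (φ1 φ2 : UnitCircle → ℂ) (F : UnitCircle → ℂ) :
    mul2 φ1 φ2 (fun x => zz x ^ 2 * F x) = fun x => zz x ^ 2 * mul2 φ1 φ2 F x := by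
  funext x
  simp only [mul2, evenPart, oddPart, zz_shift]
  ring

end Stmt8

/-- A bounded operator `S` on `L²(𝕋)` commutes with `M_{z²}` iff there are
`φ₁, φ₂ ∈ L^∞` with `Sf = φ₁ f^e + φ₂ f^o` for all `f`. -/
theorem stmt_8 (Mz2 : L2T →L[ℂ] L2T)
    (hMz2 : ∀ f : L2T, (Mz2 f : UnitCircle → ℂ) =ᵐ[hm]
      fun x => zz x ^ 2 * (f : UnitCircle → ℂ) x)
    (S : L2T →L[ℂ] L2T) :
    (∀ f, S (Mz2 f) = Mz2 (S f)) ↔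
      ∃ φ1 φ2 : UnitCircle → ℂ, MemLp φ1 ⊤ hm ∧ MemLp φ2 ⊤ hm ∧
        ∀ f : L2T, (S f : UnitCircle → ℂ) =ᵐ[hm]
          fun x => φ1 x * evenPart (f : UnitCircle → ℂ) x
            + φ2 x * oddPart (f : UnitCircle → ℂ) x := by
  constructor
  · intro hcomm
    set φ1 : UnitCircle → ℂ := fun x => (S (fourierLp 2 0) : UnitCircle → ℂ) x with hφ1
    set φ2 : UnitCircle → ℂ :=
      fun x => (zz x)⁻¹ * (S (fourierLp 2 1) : UnitCircle → ℂ) x with hφ2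
    have hrep : ∀ f : L2T, ⇑(S f) =ᵐ[hm] mul2 φ1 φ2 ⇑f :=
      fun f => Stmt8.main_rep Mz2 hMz2 S hcomm f
    have hm1 : MemLp φ1 ⊤ hm :=
      Stmt8.bound_lemma (Lp.aestronglyMeasurable _) (2 * ‖S‖ ^ 2) (by positivity)
        (fun A hA => (Stmt8.key_both S φ1 φ2 hrep A hA).1)
    have hm2 : MemLp φ2 ⊤ hm := by
      refine Stmt8.bound_lemma ?_ (2 * ‖S‖ ^ 2) (by positivity)
        (fun A hA => (Stmt8.key_both S φ1 φ2 hrep A hA).2)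
      exact (((map_continuous (fourier 1)).inv₀
        (fun x => Stmt8.fourier_ne_zero 1 x)).aestronglyMeasurable).mul
        (Lp.aestronglyMeasurable _)
    exact ⟨φ1, φ2, hm1, hm2, fun f => hrep f⟩
  · rintro ⟨φ1, φ2, -, -, hrep⟩ f
    refine Lp.ext (?_ : ⇑(S (Mz2 f)) =ᵐ[hm] ⇑(Mz2 (S f)))
    have e1 : ⇑(S (Mz2 f)) =ᵐ[hm] mul2 φ1 φ2 ⇑(Mz2 f) := hrep (Mz2 f)
    have e2 : mul2 φ1 φ2 ⇑(Mz2 f)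
        =ᵐ[hm] mul2 φ1 φ2 (fun x => zz x ^ 2 * (f : UnitCircle → ℂ) x) :=
      Stmt8.mul2_congr _ _ (hMz2 f)
    have e4 : (fun x => zz x ^ 2 * mul2 φ1 φ2 (⇑f) x)
        =ᵐ[hm] fun x => zz x ^ 2 * (S f : UnitCircle → ℂ) x := by
      filter_upwards [hrep f] with x hx
      rw [hx]
      rfl
    exact ((e1.trans (e2.trans (by rw [Stmt8.mul2_shift]))).trans e4).trans (hMz2 (S f)).symm
end
end

section
/- If C is a conjugation on L²(𝕋) satisfying C M_{z²} = M_{\bar{z}²} C, then there exist φ_1, φ_2 ∈ L^∞(𝕋) with |φ_1|² + |φ_2|² = 2 a.e. and φ_1^e = φ_2^e such that C = M_{[φ_1,φ_2]} ∘ C_{z²}, where C_{z²}(f) = z\bar{f} and M_{[φ_1,φ_2]}f = φ_1 f^e + φ_2 f^o. Conversely, any such C satisfies C M_{z²} = M_{\bar{z}²} C. -/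
open MeasureTheory Complex
open scoped Real

noncomputable section

/-! ### Auxiliary lemmas -/

namespace S10

/-- the point `π` on the circle -/
def pc : UnitCircle := ((Real.pi : ℝ) : UnitCircle)

lemma pc_add_pc : pc + pc = (0 : UnitCircle) := by
  have : ((Real.pi : ℝ) : UnitCircle) + ((Real.pi : ℝ) : UnitCircle)
      = (((2 * Real.pi : ℝ)) : UnitCircle) := by
    rw [← AddCircle.coe_add]; ring_nf
  rw [pc, this, AddCircle.coe_period]

lemma norm_fourier (n : ℤ) (x : UnitCircle) : ‖(fourier n x : ℂ)‖ = 1 := by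
  rw [fourier_apply]; exact Circle.norm_coe _

lemma fourier_ne_zero (n : ℤ) (x : UnitCircle) : (fourier n x : ℂ) ≠ 0 := by
  intro h
  have := norm_fourier n x
  rw [h] at this; simp at this

lemma fourier_mul_conj (n : ℤ) (x : UnitCircle) :
    (fourier n x : ℂ) * (starRingEnd ℂ) (fourier n x) = 1 := by
  rw [Complex.mul_conj, Complex.normSq_eq_norm_sq]
  norm_cast
  rw [norm_fourier]; norm_num

lemma fourier_pi (n : ℤ) : (fourier n (pc) : ℂ) = (-1)^n := by
  rw [pc, fourier_coe_apply]
  have hπ : (Real.pi:ℂ) ≠ 0 := ofReal_ne_zero.mpr Real.pi_ne_zero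
  have : 2 * (Real.pi:ℂ) * I * n * (Real.pi:ℂ) / ((2:ℝ) * (Real.pi:ℝ) : ℝ) = n * (Real.pi * I) := by
    push_cast
    rw [div_eq_iff (by simp [hπ])]
    ring
  rw [this, Complex.exp_int_mul, Complex.exp_pi_mul_I]

lemma fourier_hom (n : ℤ) (x y : UnitCircle) :
    (fourier n (x + y) : ℂ) = fourier n x * fourier n y := by
  rw [fourier_apply, smul_add, AddCircle.toCircle_add, fourier_apply, fourier_apply,
    Circle.coe_mul]

lemma fourier_shift (n : ℤ) (x : UnitCircle) :
    (fourier n (x + pc) : ℂ) = (-1)^n * fourier n x := by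
  rw [fourier_hom, fourier_pi, mul_comm]

lemma zz_shift (x : UnitCircle) : zz (x + pc) = - zz x := by
  show (fourier 1 (x + pc) : ℂ) = - fourier 1 x
  rw [fourier_shift]; simp

lemma neg_one_zpow_mul (n : ℤ) : ((-1 : ℂ))^n * (-1:ℂ)^n = 1 := by
  rw [← zpow_add₀ (by norm_num : (-1:ℂ) ≠ 0)]
  have : ∃ k : ℤ, n + n = 2 * k := ⟨n, by ring⟩
  obtain ⟨k, hk⟩ := this
  rw [hk, zpow_mul]
  norm_num

/-- shift of an a.e. equality -/
lemma ae_shift {u v : UnitCircle → ℂ} (h : u =ᵐ[hm] v) :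
    (fun x => u (x + pc)) =ᵐ[hm] (fun x => v (x + pc)) :=
  (measurePreserving_add_right hm pc).quasiMeasurePreserving.ae_eq_comp h

lemma ae_shiftP {p : UnitCircle → Prop} (h : ∀ᵐ x ∂hm, p x) :
    ∀ᵐ x ∂hm, p (x + pc) :=
  (measurePreserving_add_right hm pc).quasiMeasurePreserving.ae h

lemma evenPart_apply (u : UnitCircle → ℂ) (x : UnitCircle) :
    evenPart u x = (u x + u (x + pc)) / 2 := rfl

lemma oddPart_apply (u : UnitCircle → ℂ) (x : UnitCircle) :
    oddPart u x = (u x - u (x + pc)) / 2 := rfl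

lemma evenPart_congr {u v : UnitCircle → ℂ} (h : u =ᵐ[hm] v) :
    evenPart u =ᵐ[hm] evenPart v := by
  filter_upwards [h, ae_shift h] with x hx hx'
  rw [evenPart_apply, evenPart_apply, hx, hx']

lemma oddPart_congr {u v : UnitCircle → ℂ} (h : u =ᵐ[hm] v) :
    oddPart u =ᵐ[hm] oddPart v := by
  filter_upwards [h, ae_shift h] with x hx hx'
  rw [oddPart_apply, oddPart_apply, hx, hx']

lemma evenPart_fourier (n : ℤ) :
    evenPart (fun x => (fourier n x : ℂ)) = fun x => (if Even n then (fourier n x :ℂ) else 0) := by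
  funext x
  rw [evenPart_apply, fourier_shift]
  rcases Int.even_or_odd n with he | ho
  · rw [if_pos he, (Even.neg_one_zpow he)]
    ring
  · rw [if_neg (by simpa using (Int.not_even_iff_odd).symm.mp ho), Odd.neg_one_zpow ho]
    ring

lemma oddPart_fourier (n : ℤ) :
    oddPart (fun x => (fourier n x : ℂ)) = fun x => (if Even n then 0 else (fourier n x :ℂ)) := by
  funext x
  rw [oddPart_apply, fourier_shift]
  rcases Int.even_or_odd n with he | ho
  · rw [if_pos he, (Even.neg_one_zpow he)]
    ring
  · rw [if_neg (by simpa using (Int.not_even_iff_odd).symm.mp ho), Odd.neg_one_zpow ho]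
    ring

end S10
namespace S10

lemma zz_eq (x : UnitCircle) : zz x = fourier 1 x := rfl

lemma zz_mul_conj (x : UnitCircle) : zz x * (starRingEnd ℂ) (zz x) = 1 :=
  fourier_mul_conj 1 x

lemma norm_zz (x : UnitCircle) : ‖zz x‖ = 1 := norm_fourier 1 x

/-- multiplication by a unimodular character preserves `L²` -/
lemma memL2_fourier_mul (m : ℤ) {ψ : UnitCircle → ℂ} (hψ : MemLp ψ 2 hm) :
    MemLp (fun x => (fourier m x : ℂ) * ψ x) 2 hm := by
  refine ⟨((map_continuous (fourier m)).aestronglyMeasurable).mul hψ.1, ?_⟩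
  have : eLpNorm (fun x => (fourier m x : ℂ) * ψ x) 2 hm = eLpNorm ψ 2 hm := by
    apply eLpNorm_congr_norm_ae
    filter_upwards with x
    rw [norm_mul, norm_fourier, one_mul]
  rw [this]; exact hψ.2

lemma memL2_conj {ψ : UnitCircle → ℂ} (hψ : MemLp ψ 2 hm) :
    MemLp (fun x => (starRingEnd ℂ) (ψ x)) 2 hm := by
  refine ⟨continuous_star.comp_aestronglyMeasurable hψ.1, ?_⟩
  have : eLpNorm (fun x => (starRingEnd ℂ) (ψ x)) 2 hm = eLpNorm ψ 2 hm := by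
    apply eLpNorm_congr_norm_ae
    filter_upwards with x
    exact norm_star _
  rw [this]; exact hψ.2

lemma memJfun (f : UnitCircle → ℂ) (hf : MemLp f 2 hm) :
    MemLp (fun y => zz y * (starRingEnd ℂ) (f y)) 2 hm :=
  memL2_fourier_mul 1 (memL2_conj hf)

/-- the conjugation `C_{z²} : f ↦ z ⋅ conj f` on `L²` -/
def Jop (f : L2T) : L2T := (memJfun _ (Lp.memLp f)).toLp _

lemma coe_Jop (f : L2T) :
    ⇑(Jop f) =ᵐ[hm] fun y => zz y * (starRingEnd ℂ) ((f : UnitCircle → ℂ) y) :=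
  (memJfun _ (Lp.memLp f)).coeFn_toLp

lemma Jop_Jop (f : L2T) : Jop (Jop f) = f := by
  apply Lp.ext
  filter_upwards [coe_Jop (Jop f), coe_Jop f] with x hx hx'
  rw [hx, hx', map_mul, Complex.conj_conj,
    show zz x * ((starRingEnd ℂ) (zz x) * (f : UnitCircle → ℂ) x)
      = (zz x * (starRingEnd ℂ) (zz x)) * (f : UnitCircle → ℂ) x from by ring,
    zz_mul_conj, one_mul]

lemma Jop_add (f g : L2T) : Jop (f + g) = Jop f + Jop g := by
  apply Lp.ext
  filter_upwards [coe_Jop (f + g), coe_Jop f, coe_Jop g, Lp.coeFn_add f g,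
    Lp.coeFn_add (Jop f) (Jop g)] with x h1 h2 h3 h4 h5
  rw [h1, h5, Pi.add_apply, h2, h3, h4, Pi.add_apply, map_add]
  ring

lemma Jop_smul (c : ℂ) (f : L2T) : Jop (c • f) = (starRingEnd ℂ) c • Jop f := by
  apply Lp.ext
  filter_upwards [coe_Jop (c • f), coe_Jop f, Lp.coeFn_smul c f,
    Lp.coeFn_smul ((starRingEnd ℂ) c) (Jop f)] with x h1 h2 h3 h4
  rw [h1, h4, Pi.smul_apply, h2, h3, Pi.smul_apply]
  simp only [smul_eq_mul, map_mul]
  ring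

lemma norm_Jop (f : L2T) : ‖Jop f‖ = ‖f‖ := by
  have h1 : ‖Jop f‖ = (eLpNorm (fun y => zz y * (starRingEnd ℂ) ((f : UnitCircle → ℂ) y)) 2 hm).toReal :=
    Lp.norm_toLp _ _
  have h2 : eLpNorm (fun y => zz y * (starRingEnd ℂ) ((f : UnitCircle → ℂ) y)) 2 hm
      = eLpNorm (f : UnitCircle → ℂ) 2 hm := by
    apply eLpNorm_congr_norm_ae
    filter_upwards with x
    rw [norm_mul, norm_zz, one_mul]
    exact norm_star _
  rw [h1, h2, ← Lp.norm_def]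

/-- `J` maps the basis monomial `z^n` to `z^{1-n}`. -/
lemma Jop_en (n : ℤ) : Jop (fourierLp 2 n) = (fourierLp 2 (1 - n) : L2T) := by
  apply Lp.ext
  filter_upwards [coe_Jop (fourierLp 2 n), coeFn_fourierLp 2 n, coeFn_fourierLp 2 (1 - n)]
    with x h1 h2 h3
  rw [h1, h2, h3, show (1 : ℤ) - n = 1 + -n from by ring, fourier_add, fourier_neg, zz_eq]

end S10
namespace S10

/-- Density transfer: a linear isometric map determined on Fourier monomials by a
pair of multipliers acts by the corresponding even/odd multiplier formula everywhere. -/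
lemma DT (R : L2T → L2T)
    (hadd : ∀ f g, R (f + g) = R f + R g)
    (hsmul : ∀ (c : ℂ) (f), R (c • f) = c • R f)
    (hnorm : ∀ f, ‖R f‖ = ‖f‖)
    (ψe ψo : UnitCircle → ℂ)
    (hbasis : ∀ n : ℤ, ⇑(R (fourierLp 2 n)) =ᵐ[hm]
      fun x => (if Even n then ψe x else ψo x) * fourier n x) :
    ∀ f : L2T, ⇑(R f) =ᵐ[hm]
      fun x => ψe x * evenPart (⇑f) x + ψo x * oddPart (⇑f) x := by
  have hzero : R 0 = 0 := by
    have := hsmul 0 0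
    simpa using this
  have hsub : ∀ f g, R (f - g) = R f - R g := by
    intro f g
    rw [sub_eq_add_neg, hadd, show -g = (-1 : ℂ) • g from by simp, hsmul]
    simp [sub_eq_add_neg]
  have hlip : ∀ f g, ‖R f - R g‖ = ‖f - g‖ := by
    intro f g; rw [← hsub, hnorm]
  set P : L2T → Prop := fun f => ⇑(R f) =ᵐ[hm]
      fun x => ψe x * evenPart (⇑f) x + ψo x * oddPart (⇑f) x with hP
  have hspan : ∀ f ∈ Submodule.span ℂ (Set.range fun n : ℤ => (fourierLp 2 n : L2T)), P f := by
    intro f hf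
    induction hf using Submodule.span_induction with
    | mem g hg =>
      obtain ⟨n, rfl⟩ := hg
      rw [hP]
      filter_upwards [hbasis n, evenPart_congr (coeFn_fourierLp 2 n),
        oddPart_congr (coeFn_fourierLp 2 n)] with x h1 h2 h3
      rw [h1, h2, h3, evenPart_fourier, oddPart_fourier]
      rcases Int.even_or_odd n with he | ho
      · simp only [if_pos he]; ring
      · have hne := (Int.not_even_iff_odd).mpr ho
        simp only [if_neg hne]; ring
    | zero =>
      rw [hP]
      filter_upwards [Lp.coeFn_zero ℂ 2 hm, evenPart_congr (Lp.coeFn_zero ℂ 2 hm),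
        oddPart_congr (Lp.coeFn_zero ℂ 2 hm)] with x h1 h2 h3
      rw [hzero, h1, h2, h3]
      simp [evenPart, oddPart]
    | add g g' _ _ hg hg' =>
      rw [hP]
      filter_upwards [hg, hg', Lp.coeFn_add (R g) (R g'), evenPart_congr (Lp.coeFn_add g g'),
        oddPart_congr (Lp.coeFn_add g g'), ae_shift (Lp.coeFn_add g g'),
        Lp.coeFn_add g g'] with x h1 h2 h3 h4 h5 h6 h7
      rw [hadd, h3, Pi.add_apply, h1, h2, h4, h5]
      simp only [evenPart, oddPart, Pi.add_apply, h6, h7]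
      ring
    | smul c g _ hg =>
      rw [hP]
      filter_upwards [hg, Lp.coeFn_smul c (R g), evenPart_congr (Lp.coeFn_smul c g),
        oddPart_congr (Lp.coeFn_smul c g), ae_shift (Lp.coeFn_smul c g),
        Lp.coeFn_smul c g] with x h1 h2 h3 h4 h5 h6
      rw [hsmul, h2, Pi.smul_apply, h1, h3, h4]
      simp only [evenPart, oddPart, Pi.smul_apply, h5, h6, smul_eq_mul]
      ring
  -- density
  intro f
  have hcl : f ∈ closure ((Submodule.span ℂ (Set.range fun n : ℤ => (fourierLp 2 n : L2T)) :
      Submodule ℂ L2T) : Set L2T) := by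
    have htop := span_fourierLp_closure_eq_top (T := 2 * Real.pi)
      (p := 2) (by norm_num)
    have : f ∈ (Submodule.span ℂ (Set.range fun n : ℤ =>
        (fourierLp 2 n : L2T))).topologicalClosure := by
      rw [htop]; trivial
    simpa [← Submodule.topologicalClosure_coe] using this
  obtain ⟨u, hu_mem, hu_tendsto⟩ := mem_closure_iff_seq_limit.mp hcl
  have hRu : Filter.Tendsto (fun n => R (u n)) Filter.atTop (nhds (R f)) := by
    rw [tendsto_iff_dist_tendsto_zero]
    have : ∀ n, dist (R (u n)) (R f) = dist (u n) f := by
      intro n; rw [dist_eq_norm, dist_eq_norm, hlip]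
    simp only [this]
    rw [← tendsto_iff_dist_tendsto_zero]
    exact hu_tendsto
  have h1 : TendstoInMeasure hm (fun n => ⇑(u n)) Filter.atTop ⇑f :=
    tendstoInMeasure_of_tendsto_Lp hu_tendsto
  obtain ⟨ns, hns, hae1⟩ := h1.exists_seq_tendsto_ae
  have h2 : TendstoInMeasure hm (fun n => ⇑(R (u (ns n)))) Filter.atTop ⇑(R f) :=
    tendstoInMeasure_of_tendsto_Lp (hRu.comp hns.tendsto_atTop)
  obtain ⟨ms, hms, hae2⟩ := h2.exists_seq_tendsto_ae
  have hPu : ∀ᵐ x ∂hm, ∀ i : ℕ, ⇑(R (u (ns (ms i)))) x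
      = ψe x * evenPart (⇑(u (ns (ms i)))) x + ψo x * oddPart (⇑(u (ns (ms i)))) x := by
    rw [MeasureTheory.ae_all_iff]
    intro i
    exact hspan _ (hu_mem _)
  filter_upwards [hae1, ae_shiftP hae1, hae2, hPu] with x hx1 hx1' hx2 hxP
  -- limits
  have hconv1 : Filter.Tendsto (fun i => ⇑(u (ns (ms i))) x) Filter.atTop (nhds (⇑f x)) := by
    have := hx1.comp hms.tendsto_atTop
    simpa [Function.comp_def] using this
  have hconv1' : Filter.Tendsto (fun i => ⇑(u (ns (ms i))) (x + pc)) Filter.atTop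
      (nhds (⇑f (x + pc))) := by
    have := hx1'.comp hms.tendsto_atTop
    simpa [Function.comp_def] using this
  have hconv3 : Filter.Tendsto
      (fun i => ψe x * evenPart (⇑(u (ns (ms i)))) x + ψo x * oddPart (⇑(u (ns (ms i)))) x)
      Filter.atTop (nhds (ψe x * evenPart (⇑f) x + ψo x * oddPart (⇑f) x)) := by
    simp only [evenPart_apply, oddPart_apply]
    exact (((hconv1.add hconv1').div_const 2).const_mul (ψe x)).add
      (((hconv1.sub hconv1').div_const 2).const_mul (ψo x))
  have hconv2 : Filter.Tendsto (fun i => ⇑(R (u (ns (ms i)))) x) Filter.atTop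
      (nhds (⇑(R f) x)) := hx2
  have := hconv2
  simp only [hxP] at this
  exact tendsto_nhds_unique this hconv3

end S10
namespace S10

lemma fourierCoeff_congr_ae {u v : UnitCircle → ℂ} (h : u =ᵐ[hm] v) (n : ℤ) :
    fourierCoeff u n = fourierCoeff v n := by
  unfold fourierCoeff
  apply integral_congr_ae
  filter_upwards [h] with x hx
  rw [hx]

lemma fourierCoeff_fourier_mul (m n : ℤ) (ψ : UnitCircle → ℂ) :
    fourierCoeff (fun x => (fourier m x : ℂ) * ψ x) n = fourierCoeff ψ (n - m) := by
  unfold fourierCoeff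
  apply integral_congr_ae
  filter_upwards with x
  simp only [smul_eq_mul]
  rw [show (fourier (-n) x : ℂ) * ((fourier m x : ℂ) * ψ x)
      = ((fourier (-n) x : ℂ) * (fourier m x : ℂ)) * ψ x from by ring, ← fourier_add]
  rw [show -n + m = -(n - m) from by ring]

lemma neg_pc : -pc = pc := neg_eq_of_add_eq_zero_left pc_add_pc

lemma neg_one_zpow_neg (n : ℤ) : ((-1 : ℂ))^(-n) = (-1 : ℂ)^n := by
  rw [zpow_neg]
  exact inv_eq_of_mul_eq_one_right (neg_one_zpow_mul n)

lemma fourierCoeff_shift (ψ : UnitCircle → ℂ) (n : ℤ) :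
    fourierCoeff (fun x => ψ (x + pc)) n = (-1 : ℂ)^n * fourierCoeff ψ n := by
  unfold fourierCoeff
  have key : ∫ x, (fourier (-n) x : ℂ) • ψ (x + pc) ∂hm
      = ∫ x, (fourier (-n) (x - pc) : ℂ) • ψ x ∂hm := by
    rw [← integral_add_right_eq_self (μ := hm)
      (fun y => (fourier (-n) (y - pc) : ℂ) • ψ y) pc]
    congr 1
    funext x
    rw [add_sub_cancel_right]
  rw [key]
  have h2 : ∀ x : UnitCircle, (fourier (-n) (x - pc) : ℂ) • ψ x
      = ((-1:ℂ)^n) • ((fourier (-n) x : ℂ) • ψ x) := by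
    intro x
    rw [sub_eq_add_neg, neg_pc, fourier_shift, neg_one_zpow_neg]
    simp only [smul_eq_mul]
    ring
  simp only [h2]
  rw [integral_smul, smul_eq_mul]

lemma integrable_of_L2 {ψ : UnitCircle → ℂ} (hψ : MemLp ψ 2 hm) : Integrable ψ hm :=
  hψ.integrable (by norm_num)

lemma fourierCoeff_add' {u v : UnitCircle → ℂ} (hu : Integrable u hm) (hv : Integrable v hm)
    (n : ℤ) : fourierCoeff (fun x => u x + v x) n = fourierCoeff u n + fourierCoeff v n := by
  unfold fourierCoeff
  have h1 : Integrable (fun x => (fourier (-n) x : ℂ) • u x) hm := by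
    apply Integrable.bdd_mul (c := 1) hu ((map_continuous (fourier (-n))).aestronglyMeasurable)
    exact Filter.Eventually.of_forall (fun x => le_of_eq (norm_fourier _ _))
  have h2 : Integrable (fun x => (fourier (-n) x : ℂ) • v x) hm := by
    apply Integrable.bdd_mul (c := 1) hv ((map_continuous (fourier (-n))).aestronglyMeasurable)
    exact Filter.Eventually.of_forall (fun x => le_of_eq (norm_fourier _ _))
  simp only [smul_add]
  exact integral_add h1 h2

lemma fourierCoeff_sub' {u v : UnitCircle → ℂ} (hu : Integrable u hm) (hv : Integrable v hm)
    (n : ℤ) : fourierCoeff (fun x => u x - v x) n = fourierCoeff u n - fourierCoeff v n := by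
  have hnegv : Integrable (fun x => -(v x)) hm := hv.neg
  have h1 := fourierCoeff_add' hu hnegv n
  have h2 : fourierCoeff (fun x => -(v x)) n = - fourierCoeff v n := by
    have := fourierCoeff.const_smul (T := 2 * Real.pi) v (-1 : ℂ) n
    simp at this
    exact this
  simp only [sub_eq_add_neg]
  rw [← h2, ← h1]

/-- an `L²` function with vanishing Fourier coefficients vanishes a.e. -/
lemma ae_zero_of_fourierCoeff {ψ : UnitCircle → ℂ} (hψ : MemLp ψ 2 hm)
    (h : ∀ n : ℤ, fourierCoeff ψ n = 0) : ψ =ᵐ[hm] 0 := by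
  set V : L2T := hψ.toLp ψ with hV
  have hrepr : fourierBasis.repr V = 0 := by
    ext i
    rw [fourierBasis_repr]
    have : fourierCoeff (⇑V : UnitCircle → ℂ) i = fourierCoeff ψ i :=
      fourierCoeff_congr_ae hψ.coeFn_toLp i
    rw [this, h i]
    rfl
  have hV0 : V = 0 := by
    apply fourierBasis.repr.injective
    rw [hrepr, map_zero]
  have := hψ.coeFn_toLp
  rw [← hV] at this
  rw [hV0] at this
  exact this.symm.trans (Lp.coeFn_zero ℂ 2 hm)

end S10
namespace S10

lemma key_alg (p pp q qp : ℂ)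
    (hA : p * (((starRingEnd ℂ) q + (starRingEnd ℂ) qp)/2)
        + q * (((starRingEnd ℂ) q - (starRingEnd ℂ) qp)/2) = 1)
    (hB : p * (((starRingEnd ℂ) p - (starRingEnd ℂ) pp)/2)
        + q * (((starRingEnd ℂ) p + (starRingEnd ℂ) pp)/2) = 1)
    (hE : (p + pp)/2 = (q + qp)/2) :
    ‖p‖^2 + ‖q‖^2 = 2 := by
  have hAc := congrArg (starRingEnd ℂ) hA
  have hBc := congrArg (starRingEnd ℂ) hB
  simp only [map_add, map_mul, map_div₀, map_sub, map_one, map_ofNat, Complex.conj_conj] at hAc hBc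
  have key : p * (starRingEnd ℂ) p + q * (starRingEnd ℂ) q = 2 := by
    linear_combination hAc + hBc + ((starRingEnd ℂ) p - (starRingEnd ℂ) q) * hE
  have h1 : ((Complex.normSq p : ℂ)) + (Complex.normSq q : ℂ) = 2 := by
    rw [← Complex.mul_conj, ← Complex.mul_conj]; exact key
  have h2 : (Complex.normSq p) + (Complex.normSq q) = 2 := by
    exact_mod_cast h1
  rw [← Complex.sq_norm, ← Complex.sq_norm] at h2
  exact h2

lemma hat_sym (C : L2T → L2T) (hC : IsConjugation C) (m n : ℤ) :
    fourierCoeff (⇑(C (fourierLp 2 m)) : UnitCircle → ℂ) n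
      = fourierCoeff (⇑(C (fourierLp 2 n)) : UnitCircle → ℂ) m := by
  have h1 : (inner ℂ (C (fourierLp 2 m)) (fourierLp 2 n) : ℂ)
      = inner ℂ (C (fourierLp 2 n)) (fourierLp 2 m) := by
    have := hC.inner_eq (fourierLp 2 m) (C (fourierLp 2 n))
    rwa [hC.involutive] at this
  have h2 : ∀ (g : L2T) (k : ℤ),
      fourierCoeff (⇑g : UnitCircle → ℂ) k = inner ℂ (fourierLp 2 k) g := by
    intro g k
    rw [← fourierBasis_repr, fourierBasis.repr_apply_apply, coe_fourierBasis]
  rw [h2, h2, ← inner_conj_symm, h1, inner_conj_symm]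

end S10
namespace S10

lemma zz_sq (x : UnitCircle) : zz x ^ 2 = fourier 2 x := by
  rw [zz_eq, sq, ← fourier_add]
  norm_num

lemma conj_zz_sq (x : UnitCircle) : (starRingEnd ℂ) (zz x) ^ 2 = fourier (-2) x := by
  rw [zz_eq, ← fourier_neg, sq, ← fourier_add]
  norm_num

section Ops

variable (Mz2 Mzb2 : L2T →L[ℂ] L2T)
variable (hMz2 : ∀ f : L2T, (Mz2 f : UnitCircle → ℂ) =ᵐ[hm]
      fun x => zz x ^ 2 * (f : UnitCircle → ℂ) x)
variable (hMzb2 : ∀ f : L2T, (Mzb2 f : UnitCircle → ℂ) =ᵐ[hm]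
      fun x => (starRingEnd ℂ) (zz x) ^ 2 * (f : UnitCircle → ℂ) x)

include hMz2 in
lemma Mz2_en (n : ℤ) : Mz2 (fourierLp 2 n) = (fourierLp 2 (n + 2) : L2T) := by
  apply Lp.ext
  filter_upwards [hMz2 (fourierLp 2 n), coeFn_fourierLp 2 n, coeFn_fourierLp 2 (n + 2)]
    with x h1 h2 h3
  rw [h1, h2, h3, zz_sq, fourier_add]
  ring

include hMzb2 in
lemma Mzb2_en (n : ℤ) : Mzb2 (fourierLp 2 n) = (fourierLp 2 (n - 2) : L2T) := by
  apply Lp.ext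
  filter_upwards [hMzb2 (fourierLp 2 n), coeFn_fourierLp 2 n, coeFn_fourierLp 2 (n - 2)]
    with x h1 h2 h3
  rw [h1, h2, h3, conj_zz_sq, show n - 2 = -2 + n from by ring, fourier_add]

variable (C : L2T → L2T)
variable (hcomm : ∀ f, C (Mz2 f) = Mzb2 (C f))
variable (hcomm' : ∀ f, C (Mzb2 f) = Mz2 (C f))

include hMz2 hMzb2 hcomm hcomm' in
/-- values of `C` on the basis, by induction in steps of two -/
lemma C_en (r : ℤ) : ∀ k : ℤ, (⇑(C (fourierLp 2 (2*k + r))) : UnitCircle → ℂ) =ᵐ[hm]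
    fun x => (fourier (-(2*k)) x : ℂ) * (⇑(C (fourierLp 2 r)) x) := by
  intro k
  induction k using Int.induction_on with
  | zero =>
    simp only [show (2*(0:ℤ) + r) = r from by ring, show (-(2*(0:ℤ))) = (0:ℤ) from by ring,
      fourier_zero, one_mul]
    exact Filter.EventuallyEq.rfl
  | succ k ih =>
    have harith : 2*((k : ℤ)+1) + r = (2*(k:ℤ) + r) + 2 := by ring
    rw [harith, ← Mz2_en Mz2 hMz2, hcomm]
    filter_upwards [hMzb2 (C (fourierLp 2 (2*(k:ℤ) + r))), ih] with x h1 h2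
    rw [h1, h2, conj_zz_sq, show -(2*((k:ℤ)+1)) = -2 + -(2*(k:ℤ)) from by ring, fourier_add]
    ring
  | pred k ih =>
    have harith : 2*(-(k : ℤ)-1) + r = (2*(-(k:ℤ)) + r) - 2 := by ring
    rw [harith, ← Mzb2_en Mzb2 hMzb2, hcomm']
    filter_upwards [hMz2 (C (fourierLp 2 (2*(-(k:ℤ)) + r))), ih] with x h1 h2
    rw [h1, h2, zz_sq, show -(2*(-(k:ℤ)-1)) = 2 + -(2*(-(k:ℤ))) from by ring, fourier_add]
    ring

end Ops

end S10
open S10 in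
/-- Characterization of conjugations `C` with `C M_{z²} = M_{z̄²} C`. -/
theorem stmt_10 (Mz2 Mzb2 : L2T →L[ℂ] L2T)
    (hMz2 : ∀ f : L2T, (Mz2 f : UnitCircle → ℂ) =ᵐ[hm]
      fun x => zz x ^ 2 * (f : UnitCircle → ℂ) x)
    (hMzb2 : ∀ f : L2T, (Mzb2 f : UnitCircle → ℂ) =ᵐ[hm]
      fun x => (starRingEnd ℂ) (zz x) ^ 2 * (f : UnitCircle → ℂ) x)
    (C : L2T → L2T) (hC : IsConjugation C) :
    ((∀ f, C (Mz2 f) = Mzb2 (C f)) →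
      ∃ φ1 φ2 : UnitCircle → ℂ, MemLp φ1 ⊤ hm ∧ MemLp φ2 ⊤ hm ∧
        (∀ᵐ x ∂hm, ‖φ1 x‖ ^ 2 + ‖φ2 x‖ ^ 2 = 2) ∧
        (∀ᵐ x ∂hm, evenPart φ1 x = evenPart φ2 x) ∧
        ∀ f : L2T, (C f : UnitCircle → ℂ) =ᵐ[hm]
          mul2 φ1 φ2 (fun y => zz y * (starRingEnd ℂ) ((f : UnitCircle → ℂ) y))) ∧
    ((∃ φ1 φ2 : UnitCircle → ℂ, MemLp φ1 ⊤ hm ∧ MemLp φ2 ⊤ hm ∧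
        ∀ f : L2T, (C f : UnitCircle → ℂ) =ᵐ[hm]
          mul2 φ1 φ2 (fun y => zz y * (starRingEnd ℂ) ((f : UnitCircle → ℂ) y))) →
      ∀ f, C (Mz2 f) = Mzb2 (C f)) := by
  constructor
  · -- Forward direction
    intro h
    -- `C` intertwines the other way as well
    have hcomm' : ∀ f, C (Mzb2 f) = Mz2 (C f) := by
      intro f
      have h1 := h (C f)
      rw [hC.involutive] at h1
      have h2 := congrArg C h1
      rw [hC.involutive] at h2
      exact h2.symm
    -- `C` is isometric
    have hCnorm : ∀ f, ‖C f‖ = ‖f‖ := by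
      intro f
      have h1 := hC.inner_eq f f
      rw [inner_self_eq_norm_sq_to_K, inner_self_eq_norm_sq_to_K] at h1
      have h2 : ‖C f‖^2 = ‖f‖^2 := by exact_mod_cast h1
      rw [← Real.sqrt_sq (norm_nonneg (C f)), ← Real.sqrt_sq (norm_nonneg f), h2]
    -- the multipliers
    set φ1 : UnitCircle → ℂ := ⇑(C (fourierLp 2 1)) with hφ1def
    set φ2 : UnitCircle → ℂ := fun x => (starRingEnd ℂ) (zz x) * ⇑(C (fourierLp 2 0)) x
      with hφ2def
    have hφ1L2 : MemLp φ1 2 hm := Lp.memLp _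
    have hφ2L2 : MemLp φ2 2 hm := by
      have h1 := memL2_fourier_mul (-1) (Lp.memLp (C (fourierLp 2 0)))
      have h2 : φ2 = fun x => (fourier (-1) x : ℂ) * ⇑(C (fourierLp 2 0)) x := by
        funext x
        simp only [hφ2def, fourier_neg, zz_eq]
      rw [h2]
      exact h1
    -- values on the basis
    have hce := C_en Mz2 Mzb2 hMz2 hMzb2 C h hcomm' 0
    have hco := C_en Mz2 Mzb2 hMz2 hMzb2 C h hcomm' 1
    simp only [add_zero] at hce
    -- the unitary parts
    set T : L2T → L2T := fun f => C (Jop f) with hTdef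
    set S : L2T → L2T := fun f => Jop (C f) with hSdef
    have hTS : ∀ f, T (S f) = f := by
      intro f
      rw [hTdef, hSdef]
      simp only
      rw [Jop_Jop, hC.involutive]
    have hTadd : ∀ f g, T (f + g) = T f + T g := by
      intro f g
      rw [hTdef]; simp only
      rw [Jop_add, hC.map_add]
    have hTsmul : ∀ (c : ℂ) (f), T (c • f) = c • T f := by
      intro c f
      rw [hTdef]; simp only
      rw [Jop_smul, hC.map_smul, Complex.conj_conj]
    have hTnorm : ∀ f, ‖T f‖ = ‖f‖ := by
      intro f
      rw [hTdef]; simp only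
      rw [hCnorm, norm_Jop]
    have hSadd : ∀ f g, S (f + g) = S f + S g := by
      intro f g
      rw [hSdef]; simp only
      rw [hC.map_add, Jop_add]
    have hSsmul : ∀ (c : ℂ) (f), S (c • f) = c • S f := by
      intro c f
      rw [hSdef]; simp only
      rw [hC.map_smul, Jop_smul, Complex.conj_conj]
    have hSnorm : ∀ f, ‖S f‖ = ‖f‖ := by
      intro f
      rw [hSdef]; simp only
      rw [norm_Jop, hCnorm]
    -- basis values of T
    have hTen : ∀ n : ℤ, ⇑(T (fourierLp 2 n)) =ᵐ[hm]
        fun x => (if Even n then φ1 x else φ2 x) * fourier n x := by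
      intro n
      have hJ : T (fourierLp 2 n) = C (fourierLp 2 (1 - n)) := by
        rw [hTdef]; simp only
        rw [Jop_en]
      rcases Int.even_or_odd n with ⟨k, hk⟩ | ⟨k, hk⟩
      · -- n = 2k
        have hn : n = 2*k := by omega
        have h1n : (1 : ℤ) - n = 2*(-k) + 1 := by omega
        rw [hJ, h1n]
        filter_upwards [hco (-k)] with x hx
        rw [hx, if_pos ⟨k, hk⟩]
        rw [show -(2*(-k)) = n from by omega]
        ring
      · -- n = 2k + 1
        have hn : n = 2*k + 1 := hk
        have h1n : (1 : ℤ) - n = 2*(-k) := by omega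
        rw [hJ, h1n]
        filter_upwards [hce (-k)] with x hx
        rw [hx, if_neg (Int.not_even_iff_odd.mpr ⟨k, hk⟩)]
        rw [hφ2def]
        simp only
        rw [hn, show 2*k + 1 = 1 + 2*k from by ring, fourier_add,
          show -(2*(-k)) = 2*k from by ring, ← zz_eq]
        linear_combination (-((fourier (2*k) x : ℂ) * ⇑(C (fourierLp 2 0)) x)) * zz_mul_conj x
    -- basis values of S
    have hSen : ∀ n : ℤ, ⇑(S (fourierLp 2 n)) =ᵐ[hm]
        fun x => (if Even n then (starRingEnd ℂ) (φ2 x) else (starRingEnd ℂ) (φ1 x))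
          * fourier n x := by
      intro n
      have hJ : ⇑(S (fourierLp 2 n)) =ᵐ[hm]
          fun x => zz x * (starRingEnd ℂ) (⇑(C (fourierLp 2 n)) x) := by
        rw [hSdef]; simp only
        exact coe_Jop _
      rcases Int.even_or_odd n with ⟨k, hk⟩ | ⟨k, hk⟩
      · have hn : n = 2*k := by omega
        subst hn
        filter_upwards [hJ, hce k] with x hx1 hx2
        rw [hx1, hx2, if_pos ⟨k, by omega⟩, hφ2def]
        simp only [map_mul, Complex.conj_conj]
        rw [fourier_neg, Complex.conj_conj]
        ring
      · have hn : n = 2*k + 1 := hk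
        subst hn
        filter_upwards [hJ, hco k] with x hx1 hx2
        rw [hx1, hx2, if_neg (Int.not_even_iff_odd.mpr ⟨k, by omega⟩)]
        simp only [map_mul]
        rw [fourier_neg, Complex.conj_conj,
          show 2*k + 1 = 1 + 2*k from by ring, fourier_add, ← zz_eq]
        ring
    -- the two multiplier formulas
    have hTfor := DT T hTadd hTsmul hTnorm φ1 φ2 hTen
    have hSfor := DT S hSadd hSsmul hSnorm
      (fun x => (starRingEnd ℂ) (φ2 x)) (fun x => (starRingEnd ℂ) (φ1 x)) hSen
    have hzz_ne : ∀ x : UnitCircle, zz x ≠ 0 := by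
      intro x; rw [zz_eq]; exact fourier_ne_zero 1 x
    -- equality of even Fourier coefficients of the multipliers
    have hcoeff : ∀ k : ℤ, fourierCoeff φ2 (2*k) = fourierCoeff φ1 (2*k) := by
      intro k
      have hsym := hat_sym C hC (2*k) 1
      have hL : fourierCoeff (⇑(C (fourierLp 2 (2*k))) : UnitCircle → ℂ) 1
          = fourierCoeff φ2 (2*k) := by
        rw [fourierCoeff_congr_ae (hce k) 1, fourierCoeff_fourier_mul]
        have hc0 : (⇑(C (fourierLp 2 0)) : UnitCircle → ℂ) =ᵐ[hm]
            fun x => (fourier 1 x : ℂ) * φ2 x := by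
          filter_upwards with x
          rw [hφ2def]
          simp only [← zz_eq]
          linear_combination (- (⇑(C (fourierLp 2 0)) x)) * zz_mul_conj x
        rw [S10.fourierCoeff_congr_ae hc0, fourierCoeff_fourier_mul]
        congr 1
        ring
      rw [hL, ← hφ1def] at hsym
      exact hsym
    -- equal even parts
    have hEfun : ∀ᵐ x ∂hm, evenPart φ1 x = evenPart φ2 x := by
      set w : UnitCircle → ℂ := fun y => φ2 y - φ1 y with hwdef
      have hwL2 : MemLp w 2 hm := hφ2L2.sub hφ1L2
      have hwsL2 : MemLp (fun x => w (x + pc)) 2 hm :=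
        hwL2.comp_measurePreserving (measurePreserving_add_right hm pc)
      have hvL2 : MemLp (fun x => (2⁻¹ : ℂ) * (w x + w (x + pc))) 2 hm :=
        (hwL2.add hwsL2).const_mul _
      have hvcoeff : ∀ n : ℤ, fourierCoeff (fun x => (2⁻¹ : ℂ) * (w x + w (x + pc))) n = 0 := by
        intro n
        rw [fourierCoeff.const_mul, fourierCoeff_add' (integrable_of_L2 hwL2)
          (integrable_of_L2 hwsL2), fourierCoeff_shift]
        have hwc : fourierCoeff w n = fourierCoeff φ2 n - fourierCoeff φ1 n := by
          rw [hwdef]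
          exact fourierCoeff_sub' (integrable_of_L2 hφ2L2) (integrable_of_L2 hφ1L2) n
        rcases Int.even_or_odd n with ⟨k, hk⟩ | ⟨k, hk⟩
        · have hn : n = 2*k := by omega
          rw [hwc, hn, hcoeff k]
          simp
        · rw [Odd.neg_one_zpow ⟨k, hk⟩]
          ring
      have hv0 := ae_zero_of_fourierCoeff hvL2 hvcoeff
      filter_upwards [hv0] with x hx
      simp only [Pi.zero_apply, hwdef] at hx
      rw [evenPart_apply, evenPart_apply]
      linear_combination -hx
    -- identity (A)
    have hA : ∀ᵐ x ∂hm,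
        φ1 x * (((starRingEnd ℂ) (φ2 x) + (starRingEnd ℂ) (φ2 (x + pc)))/2)
        + φ2 x * (((starRingEnd ℂ) (φ2 x) - (starRingEnd ℂ) (φ2 (x + pc)))/2) = 1 := by
      have h0 : T (S (fourierLp 2 0)) = fourierLp 2 0 := hTS _
      have h1 := hTfor (S (fourierLp 2 0))
      rw [h0] at h1
      have h2' : ⇑(S (fourierLp 2 0)) =ᵐ[hm] fun x => (starRingEnd ℂ) (φ2 x) := by
        filter_upwards [hSen 0] with x hx
        rw [hx, if_pos Even.zero, fourier_zero, mul_one]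
      filter_upwards [h1, coeFn_fourierLp 2 0, evenPart_congr h2', oddPart_congr h2']
        with x hx1 hx0 hxe hxo
      have e1 : φ1 x * evenPart (⇑(S (fourierLp 2 0))) x
          + φ2 x * oddPart (⇑(S (fourierLp 2 0))) x = 1 := by
        rw [← hx1, hx0, fourier_zero]
      rw [hxe, hxo] at e1
      have e2 : evenPart (fun y => (starRingEnd ℂ) (φ2 y)) x
          = ((starRingEnd ℂ) (φ2 x) + (starRingEnd ℂ) (φ2 (x + pc)))/2 := by
        simp only [evenPart_apply]
      have e3 : oddPart (fun y => (starRingEnd ℂ) (φ2 y)) x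
          = ((starRingEnd ℂ) (φ2 x) - (starRingEnd ℂ) (φ2 (x + pc)))/2 := by
        simp only [oddPart_apply]
      rw [e2, e3] at e1
      exact e1
    -- identity (B)
    have hB : ∀ᵐ x ∂hm,
        φ1 x * (((starRingEnd ℂ) (φ1 x) - (starRingEnd ℂ) (φ1 (x + pc)))/2)
        + φ2 x * (((starRingEnd ℂ) (φ1 x) + (starRingEnd ℂ) (φ1 (x + pc)))/2) = 1 := by
      have h0 : T (S (fourierLp 2 1)) = fourierLp 2 1 := hTS _
      have h1 := hTfor (S (fourierLp 2 1))
      rw [h0] at h1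
      have h2' : ⇑(S (fourierLp 2 1)) =ᵐ[hm] fun x => zz x * (starRingEnd ℂ) (φ1 x) := by
        filter_upwards [hSen 1] with x hx
        rw [hx, if_neg (Int.not_even_iff_odd.mpr odd_one), ← zz_eq]
        ring
      filter_upwards [h1, coeFn_fourierLp 2 1, evenPart_congr h2', oddPart_congr h2']
        with x hx1 hx0 hxe hxo
      have e1 : φ1 x * evenPart (⇑(S (fourierLp 2 1))) x
          + φ2 x * oddPart (⇑(S (fourierLp 2 1))) x = zz x := by
        rw [← hx1, hx0, zz_eq]
      rw [hxe, hxo] at e1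
      have e2 : evenPart (fun y => zz y * (starRingEnd ℂ) (φ1 y)) x
          = zz x * (((starRingEnd ℂ) (φ1 x) - (starRingEnd ℂ) (φ1 (x + pc)))/2) := by
        simp only [evenPart_apply]
        rw [zz_shift]
        ring
      have e3 : oddPart (fun y => zz y * (starRingEnd ℂ) (φ1 y)) x
          = zz x * (((starRingEnd ℂ) (φ1 x) + (starRingEnd ℂ) (φ1 (x + pc)))/2) := by
        simp only [oddPart_apply]
        rw [zz_shift]
        ring
      rw [e2, e3] at e1
      apply mul_left_cancel₀ (hzz_ne x)
      rw [mul_one]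
      linear_combination e1
    -- pointwise norm identity
    have hnorm2 : ∀ᵐ x ∂hm, ‖φ1 x‖^2 + ‖φ2 x‖^2 = 2 := by
      filter_upwards [hA, hB, hEfun] with x hxA hxB hxE
      refine key_alg (φ1 x) (φ1 (x + pc)) (φ2 x) (φ2 (x + pc)) hxA hxB ?_
      rw [evenPart_apply, evenPart_apply] at hxE
      exact hxE
    -- boundedness
    have hbdd : ∀ (ψ1 ψ2 : UnitCircle → ℂ), MemLp ψ1 2 hm →
        (∀ᵐ x ∂hm, ‖ψ1 x‖^2 + ‖ψ2 x‖^2 = 2) → MemLp ψ1 ⊤ hm := by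
      intro ψ1 ψ2 hL2 hb
      apply memLp_top_of_bound hL2.1 (Real.sqrt 2)
      filter_upwards [hb] with x hx
      have h1 : ‖ψ1 x‖^2 ≤ 2 := by nlinarith [sq_nonneg ‖ψ2 x‖]
      have h2 := Real.sqrt_le_sqrt h1
      rwa [Real.sqrt_sq (norm_nonneg _)] at h2
    have hb1 : MemLp φ1 ⊤ hm := hbdd φ1 φ2 hφ1L2 hnorm2
    have hb2 : MemLp φ2 ⊤ hm := by
      apply hbdd φ2 φ1 hφ2L2
      filter_upwards [hnorm2] with x hx
      linarith
    -- the representation formula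
    have hform : ∀ f : L2T, (C f : UnitCircle → ℂ) =ᵐ[hm]
        mul2 φ1 φ2 (fun y => zz y * (starRingEnd ℂ) ((f : UnitCircle → ℂ) y)) := by
      intro f
      have h2 : T (Jop f) = C f := by
        rw [hTdef]; simp only
        rw [Jop_Jop]
      have h1 := hTfor (Jop f)
      rw [h2] at h1
      filter_upwards [h1, evenPart_congr (coe_Jop f), oddPart_congr (coe_Jop f)]
        with x hx1 hxe hxo
      rw [hx1, hxe, hxo]
      rfl
    exact ⟨φ1, φ2, hb1, hb2, hnorm2, hEfun, hform⟩
  · -- Converse direction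
    rintro ⟨φ1, φ2, -, -, hform⟩ f
    apply Lp.ext
    have h3 := hMz2 f
    filter_upwards [hform (Mz2 f), hform f, hMzb2 (C f), h3, ae_shift h3]
      with x hx1 hx2 hx4 hx3 hx3'
    rw [hx1, hx4, hx2]
    simp only [mul2, evenPart_apply, oddPart_apply]
    rw [hx3, hx3', zz_shift]
    simp only [map_mul, map_pow, map_neg]
    ring
end
end

section
/- The map C*_{z²} on L²(𝕋) defined by C*_{z²}(f)(z) = z·conj(f^e(\bar{z})) + \bar{z}·conj(f^o(\bar{z})) is a conjugation that commutes with M_{z²} but does not commute with M_z. -/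
open MeasureTheory Complex
open scoped Real

noncomputable section

/-- `C*_{z²} f (x) = z·conj(f^e(z̄)) + z̄·conj(f^o(z̄))` (`z̄` corresponds to `-x`). -/
def cstar2 (f : UnitCircle → ℂ) : UnitCircle → ℂ :=
  fun x => zz x * (starRingEnd ℂ) (evenPart f (-x))
    + (starRingEnd ℂ) (zz x) * (starRingEnd ℂ) (oddPart f (-x))

namespace Cstar2Aux

local notation "P" => ((Real.pi : ℝ) : UnitCircle)

lemma pi2 : P + P = (0 : UnitCircle) := by
  rw [← AddCircle.coe_period (p := 2 * Real.pi), ← AddCircle.coe_add]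
  norm_num [two_mul]

lemma neg_pi : -P = P := by
  rw [neg_eq_iff_add_eq_zero, pi2]

lemma zz_neg (x : UnitCircle) : zz (-x) = (starRingEnd ℂ) (zz x) := by
  have : ((1 : ℤ) • (-x)) = -((1:ℤ) • x) := by simp
  rw [zz, zz, fourier_apply, this, fourier_neg']

lemma zz_pi (x : UnitCircle) : zz (x + P) = -zz x := by
  have h := fourier_add_half_inv_index (T := 2 * Real.pi) (n := 1) one_ne_zero
    (by positivity) x
  have h2 : ((2 * Real.pi) / 2 / ((1:ℤ) : ℝ)) = Real.pi := by push_cast; ring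
  rw [zz, zz]
  rw [h2] at h
  exact h

lemma zz_unit (x : UnitCircle) : zz x * (starRingEnd ℂ) (zz x) = 1 := by
  have h : ‖zz x‖ = 1 := by
    rw [zz, fourier_apply]; exact Circle.norm_coe _
  rw [Complex.mul_conj, Complex.normSq_eq_norm_sq, h]
  norm_num



lemma shift2 (x : UnitCircle) : (x + P) + P = x := by
  rw [add_assoc, pi2, add_zero]

lemma neg_shift (x : UnitCircle) : -(x + P) = -x + P := by
  rw [neg_add, neg_pi]

lemma evenPart_pi (u : UnitCircle → ℂ) (x : UnitCircle) :
    evenPart u (x + P) = evenPart u x := by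
  simp only [evenPart, shift2]; ring

lemma oddPart_pi (u : UnitCircle → ℂ) (x : UnitCircle) :
    oddPart u (x + P) = -oddPart u x := by
  simp only [oddPart, shift2]; ring

lemma even_add_odd (u : UnitCircle → ℂ) (x : UnitCircle) :
    evenPart u x + oddPart u x = u x := by
  simp only [evenPart, oddPart]; ring

lemma cstar2_add (u v : UnitCircle → ℂ) (x : UnitCircle) :
    cstar2 (fun y => u y + v y) x = cstar2 u x + cstar2 v x := by
  simp only [cstar2, evenPart, oddPart, map_add, map_sub, map_div₀, map_ofNat]
  ring

lemma cstar2_smul (c : ℂ) (u : UnitCircle → ℂ) (x : UnitCircle) :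
    cstar2 (fun y => c * u y) x = (starRingEnd ℂ) c * cstar2 u x := by
  simp only [cstar2, evenPart, oddPart, map_add, map_sub, map_mul, map_div₀, map_ofNat]
  ring

lemma cstar2_invol (u : UnitCircle → ℂ) (x : UnitCircle) :
    cstar2 (cstar2 u) x = u x := by
  have hz := zz_unit x
  have h1 : -(-x + P) = x + P := by rw [← neg_shift, neg_neg]
  have h4 : zz (-x + P) = -(starRingEnd ℂ) (zz x) := by rw [zz_pi, zz_neg]
  simp only [cstar2, evenPart, oddPart, neg_neg, h1, shift2, h4, zz_neg, zz_pi,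
    map_add, map_sub, map_mul, map_div₀, map_ofNat, map_neg, Complex.conj_conj]
  linear_combination (u x) * hz

lemma cstar2_z2 (u : UnitCircle → ℂ) (x : UnitCircle) :
    cstar2 (fun y => zz y ^ 2 * u y) x = zz x ^ 2 * cstar2 u x := by
  have h4 : zz (-x + P) = -(starRingEnd ℂ) (zz x) := by rw [zz_pi, zz_neg]
  simp only [cstar2, evenPart, oddPart, h4, zz_neg,
    map_add, map_sub, map_mul, map_div₀, map_ofNat, map_neg, map_pow, Complex.conj_conj]
  ring

lemma cstar2_one (x : UnitCircle) :
    cstar2 (fun _ => (1:ℂ)) x = zz x := by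
  simp only [cstar2, evenPart, oddPart, map_add, map_sub, map_div₀, map_ofNat, map_one]
  ring

lemma cstar2_zfun (x : UnitCircle) : cstar2 zz x = 1 := by
  have hz := zz_unit x
  have h4 : zz (-x + P) = -(starRingEnd ℂ) (zz x) := by rw [zz_pi, zz_neg]
  simp only [cstar2, evenPart, oddPart, h4, zz_neg,
    map_add, map_sub, map_div₀, map_ofNat, map_neg, Complex.conj_conj]
  linear_combination hz


lemma mp_pi : MeasurePreserving (fun x : UnitCircle => x + P) hm hm :=
  measurePreserving_add_right hm P

lemma mp_neg : MeasurePreserving (fun x : UnitCircle => -x) hm hm :=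
  Measure.measurePreserving_neg hm

lemma mp_negpi : MeasurePreserving (fun x : UnitCircle => -x + P) hm hm :=
  mp_pi.comp mp_neg

lemma cstar2_congr {u v : UnitCircle → ℂ} (h : u =ᵐ[hm] v) :
    cstar2 u =ᵐ[hm] cstar2 v := by
  have h1 : u ∘ (fun x : UnitCircle => -x) =ᵐ[hm] v ∘ (fun x : UnitCircle => -x) :=
    mp_neg.quasiMeasurePreserving.ae_eq_comp h
  have h2 : u ∘ (fun x : UnitCircle => -x + P) =ᵐ[hm] v ∘ (fun x : UnitCircle => -x + P) :=
    mp_negpi.quasiMeasurePreserving.ae_eq_comp h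
  filter_upwards [h1, h2] with x e1 e2
  simp only [Function.comp_apply] at e1 e2
  simp only [cstar2, evenPart, oddPart, e1, e2]

lemma int_shift_zero {F : UnitCircle → ℂ} (h : ∀ x, F (x + P) = -F x) :
    ∫ x, F x ∂hm = 0 := by
  have h1 : ∫ x, F (x + P) ∂hm = ∫ x, F x ∂hm := integral_add_right_eq_self F P
  have h2 : ∫ x, F (x + P) ∂hm = -∫ x, F x ∂hm := by
    simp only [h, integral_neg]
  have h3 := h1.symm.trans h2
  linear_combination h3 / 2

lemma memlp_even {u : UnitCircle → ℂ} (hu : MemLp u 2 hm) :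
    MemLp (evenPart u) 2 hm := by
  have h1 : MemLp (fun x : UnitCircle => u (x + P)) 2 hm :=
    hu.comp_measurePreserving mp_pi
  have : evenPart u = fun x => (2⁻¹ : ℂ) * (u x + u (x + P)) := by
    funext x; simp only [evenPart]; ring
  rw [this]
  exact (hu.add h1).const_mul _

lemma memlp_odd {u : UnitCircle → ℂ} (hu : MemLp u 2 hm) :
    MemLp (oddPart u) 2 hm := by
  have h1 : MemLp (fun x : UnitCircle => u (x + P)) 2 hm :=
    hu.comp_measurePreserving mp_pi
  have : oddPart u = fun x => (2⁻¹ : ℂ) * (u x - u (x + P)) := by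
    funext x; simp only [oddPart]; ring
  rw [this]
  exact (hu.sub h1).const_mul _

lemma memlp_conj {u : UnitCircle → ℂ} (hu : MemLp u 2 hm) :
    MemLp (fun x => (starRingEnd ℂ) (u x)) 2 hm :=
  hu.of_le (RCLike.continuous_conj.comp_aestronglyMeasurable hu.1)
    (Filter.Eventually.of_forall fun x => by simp)

lemma int_mul {F G : UnitCircle → ℂ} (hF : MemLp F 2 hm) (hG : MemLp G 2 hm) :
    Integrable (fun x => F x * G x) hm := by
  have h : (1 : ENNReal) / 1 = 1 / 2 + 1 / 2 := by
    rw [div_one]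
    exact (ENNReal.add_halves 1).symm
  have := (hG.smul (φ := F) hF : MemLp (F • G) 1 hm)
  rw [memLp_one_iff_integrable] at this
  exact this

lemma int_fmul {H : UnitCircle → ℂ} (hH : Integrable H hm) (k : ℤ) :
    Integrable (fun x => fourier k x * H x) hm :=
  Integrable.bdd_mul hH ((fourier k).continuous).aestronglyMeasurable
    (c := 1) (Filter.Eventually.of_forall fun x => le_of_eq (by simp [Circle.norm_coe]))
lemma f2_sq (x : UnitCircle) : (fourier (2:ℤ) x : ℂ) = zz x ^ 2 := by
  rw [show (2:ℤ) = 1 + 1 from rfl, fourier_add, zz]; ring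

lemma fm2_sq (x : UnitCircle) : (fourier (-2:ℤ) x : ℂ) = (starRingEnd ℂ) (zz x) ^ 2 := by
  rw [show (-2:ℤ) = -1 + -1 from rfl, fourier_add,
    show (-1:ℤ) = -(1:ℤ) from rfl, fourier_neg, zz]; ring

lemma inner_comp {u v : UnitCircle → ℂ} (hu : MemLp u 2 hm) (hv : MemLp v 2 hm) :
    ∫ x, (starRingEnd ℂ) (cstar2 u x) * cstar2 v x ∂hm
      = ∫ x, (starRingEnd ℂ) (v x) * u x ∂hm := by
  set p := evenPart u with hp
  set q := oddPart u with hq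
  set r := evenPart v with hr
  set s := oddPart v with hs
  -- MemLp facts
  have hpm : MemLp p 2 hm := memlp_even hu
  have hqm : MemLp q 2 hm := memlp_odd hu
  have hrm : MemLp r 2 hm := memlp_even hv
  have hsm : MemLp s 2 hm := memlp_odd hv
  have hpn : MemLp (fun x : UnitCircle => p (-x)) 2 hm := hpm.comp_measurePreserving mp_neg
  have hqn : MemLp (fun x : UnitCircle => q (-x)) 2 hm := hqm.comp_measurePreserving mp_neg
  have hrn : MemLp (fun x : UnitCircle => (starRingEnd ℂ) (r (-x))) 2 hm :=
    (memlp_conj hrm).comp_measurePreserving mp_neg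
  have hsn : MemLp (fun x : UnitCircle => (starRingEnd ℂ) (s (-x))) 2 hm :=
    (memlp_conj hsm).comp_measurePreserving mp_neg
  -- the four pieces on the LHS
  set F1 : UnitCircle → ℂ := fun x => p (-x) * (starRingEnd ℂ) (r (-x)) with hF1
  set F2 : UnitCircle → ℂ := fun x => q (-x) * (starRingEnd ℂ) (s (-x)) with hF2
  set F3 : UnitCircle → ℂ := fun x => fourier (-2:ℤ) x * (p (-x) * (starRingEnd ℂ) (s (-x)))
    with hF3
  set F4 : UnitCircle → ℂ := fun x => fourier (2:ℤ) x * (q (-x) * (starRingEnd ℂ) (r (-x)))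
    with hF4
  have hI1 : Integrable F1 hm := int_mul hpn hrn
  have hI2 : Integrable F2 hm := int_mul hqn hsn
  have hI3 : Integrable F3 hm := int_fmul (int_mul hpn hsn) _
  have hI4 : Integrable F4 hm := int_fmul (int_mul hqn hrn) _
  have key : ∀ x, (starRingEnd ℂ) (cstar2 u x) * cstar2 v x = F1 x + F2 x + F3 x + F4 x := by
    intro x
    have hz := zz_unit x
    simp only [hF1, hF2, hF3, hF4, fm2_sq, f2_sq, cstar2, ← hp, ← hq, ← hr, ← hs,
      map_add, map_mul, Complex.conj_conj]
    linear_combination (p (-x) * (starRingEnd ℂ) (r (-x))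
      + q (-x) * (starRingEnd ℂ) (s (-x))) * hz
  -- the four pieces on the RHS
  set G1 : UnitCircle → ℂ := fun x => p x * (starRingEnd ℂ) (r x) with hG1
  set G2 : UnitCircle → ℂ := fun x => q x * (starRingEnd ℂ) (s x) with hG2
  set G3 : UnitCircle → ℂ := fun x => p x * (starRingEnd ℂ) (s x) with hG3
  set G4 : UnitCircle → ℂ := fun x => q x * (starRingEnd ℂ) (r x) with hG4
  have hJ1 : Integrable G1 hm := int_mul hpm (memlp_conj hrm)
  have hJ2 : Integrable G2 hm := int_mul hqm (memlp_conj hsm)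
  have hJ3 : Integrable G3 hm := int_mul hpm (memlp_conj hsm)
  have hJ4 : Integrable G4 hm := int_mul hqm (memlp_conj hrm)
  have key2 : ∀ x, (starRingEnd ℂ) (v x) * u x = G1 x + G2 x + G3 x + G4 x := by
    intro x
    rw [← even_add_odd u x, ← even_add_odd v x]
    simp only [hG1, hG2, hG3, hG4, ← hp, ← hq, ← hr, ← hs, map_add]
    ring
  -- vanishing of the cross terms
  have z3 : ∫ x, F3 x ∂hm = 0 := by
    apply int_shift_zero
    intro x
    simp only [hF3, fm2_sq, neg_shift, zz_pi, hp, hs, evenPart_pi, oddPart_pi, map_neg]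
    ring
  have z4 : ∫ x, F4 x ∂hm = 0 := by
    apply int_shift_zero
    intro x
    simp only [hF4, f2_sq, neg_shift, zz_pi, hq, hr, evenPart_pi, oddPart_pi, map_neg]
    ring
  have w3 : ∫ x, G3 x ∂hm = 0 := by
    apply int_shift_zero
    intro x
    simp only [hG3, hp, hs, evenPart_pi, oddPart_pi, map_neg]
    ring
  have w4 : ∫ x, G4 x ∂hm = 0 := by
    apply int_shift_zero
    intro x
    simp only [hG4, hq, hr, evenPart_pi, oddPart_pi, map_neg]
    ring
  -- change of variables x ↦ -x
  have n1 : ∫ x, F1 x ∂hm = ∫ x, G1 x ∂hm :=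
    integral_neg_eq_self (fun y => p y * (starRingEnd ℂ) (r y)) hm
  have n2 : ∫ x, F2 x ∂hm = ∫ x, G2 x ∂hm :=
    integral_neg_eq_self (fun y => q y * (starRingEnd ℂ) (s y)) hm
  calc ∫ x, (starRingEnd ℂ) (cstar2 u x) * cstar2 v x ∂hm
      = ∫ x, (F1 x + F2 x + F3 x + F4 x) ∂hm := by
        apply integral_congr_ae
        exact Filter.Eventually.of_forall key
    _ = ∫ x, F1 x ∂hm + ∫ x, F2 x ∂hm + ∫ x, F3 x ∂hm + ∫ x, F4 x ∂hm := by
        have e1 : Integrable (fun x => F1 x + F2 x) hm := hI1.add hI2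
        have e2 : Integrable (fun x => F1 x + F2 x + F3 x) hm := e1.add hI3
        calc ∫ x, (F1 x + F2 x + F3 x + F4 x) ∂hm
            = (∫ x, (F1 x + F2 x + F3 x) ∂hm) + ∫ x, F4 x ∂hm := integral_add e2 hI4
          _ = ((∫ x, (F1 x + F2 x) ∂hm) + ∫ x, F3 x ∂hm) + ∫ x, F4 x ∂hm := by
              rw [integral_add e1 hI3]
          _ = _ := by rw [integral_add hI1 hI2]
    _ = ∫ x, G1 x ∂hm + ∫ x, G2 x ∂hm + ∫ x, G3 x ∂hm + ∫ x, G4 x ∂hm := by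
        rw [n1, n2, z3, z4, w3, w4]
    _ = ∫ x, (G1 x + G2 x + G3 x + G4 x) ∂hm := by
        have e1 : Integrable (fun x => G1 x + G2 x) hm := hJ1.add hJ2
        have e2 : Integrable (fun x => G1 x + G2 x + G3 x) hm := e1.add hJ3
        calc (∫ x, G1 x ∂hm) + (∫ x, G2 x ∂hm) + (∫ x, G3 x ∂hm) + ∫ x, G4 x ∂hm
            = ((∫ x, (G1 x + G2 x) ∂hm) + ∫ x, G3 x ∂hm) + ∫ x, G4 x ∂hm := by
              rw [integral_add hJ1 hJ2]
          _ = (∫ x, (G1 x + G2 x + G3 x) ∂hm) + ∫ x, G4 x ∂hm := by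
              rw [integral_add e1 hJ3]
          _ = _ := (integral_add e2 hJ4).symm
    _ = ∫ x, (starRingEnd ℂ) (v x) * u x ∂hm := by
        apply integral_congr_ae
        exact Filter.Eventually.of_forall fun x => (key2 x).symm
end Cstar2Aux

set_option maxHeartbeats 8000000 in
open Cstar2Aux in
/-- `C*_{z²}` is a conjugation on `L²(𝕋)` that commutes with `M_{z²}` but not
with `M_z`. -/
theorem stmt_12 (Mz Mz2 : L2T →L[ℂ] L2T)
    (hMz : ∀ f : L2T, (Mz f : UnitCircle → ℂ) =ᵐ[hm]
      fun x => zz x * (f : UnitCircle → ℂ) x)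
    (hMz2 : ∀ f : L2T, (Mz2 f : UnitCircle → ℂ) =ᵐ[hm]
      fun x => zz x ^ 2 * (f : UnitCircle → ℂ) x)
    (C : L2T → L2T)
    (hC : ∀ f : L2T, (C f : UnitCircle → ℂ) =ᵐ[hm] cstar2 (f : UnitCircle → ℂ)) :
    IsConjugation C ∧ (∀ f, C (Mz2 f) = Mz2 (C f)) ∧ ¬ (∀ f, C (Mz f) = Mz (C f)) := by
  refine ⟨⟨?_, ?_, ?_, ?_⟩, ?_, ?_⟩
  · -- map_add
    intro f g
    apply Lp.ext (p := (2:ENNReal)) (μ := hm)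
    have h1 : cstar2 (⇑(f + g)) =ᵐ[hm] cstar2 (fun x => f x + g x) :=
      cstar2_congr (Lp.coeFn_add f g)
    have h2 : (fun x => cstar2 (⇑f) x + cstar2 (⇑g) x) =ᵐ[hm]
        (fun x => (C f : UnitCircle → ℂ) x + (C g : UnitCircle → ℂ) x) := by
      filter_upwards [hC f, hC g] with x e1 e2
      rw [e1, e2]
    calc (C (f + g) : UnitCircle → ℂ)
        =ᵐ[hm] cstar2 (⇑(f + g)) := hC (f + g)
      _ =ᵐ[hm] (fun x => cstar2 (⇑f) x + cstar2 (⇑g) x) := by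
          refine h1.trans (Filter.Eventually.of_forall fun x => ?_)
          exact cstar2_add (⇑f) (⇑g) x
      _ =ᵐ[hm] (fun x => (C f : UnitCircle → ℂ) x + (C g : UnitCircle → ℂ) x) := h2
      _ =ᵐ[hm] (C f + C g : L2T) := (Lp.coeFn_add (C f) (C g)).symm
  · -- map_smul
    intro c f
    apply Lp.ext (p := (2:ENNReal)) (μ := hm)
    have h1 : cstar2 (⇑(c • f)) =ᵐ[hm] cstar2 (fun x => c * f x) :=
      cstar2_congr (Lp.coeFn_smul c f)
    calc (C (c • f) : UnitCircle → ℂ)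
        =ᵐ[hm] cstar2 (⇑(c • f)) := hC (c • f)
      _ =ᵐ[hm] (fun x => (starRingEnd ℂ) c * cstar2 (⇑f) x) := by
          refine h1.trans (Filter.Eventually.of_forall fun x => ?_)
          exact cstar2_smul c (⇑f) x
      _ =ᵐ[hm] (fun x => (starRingEnd ℂ) c * (C f : UnitCircle → ℂ) x) := by
          filter_upwards [hC f] with x e1
          rw [e1]
      _ =ᵐ[hm] ((starRingEnd ℂ) c • C f : L2T) := (Lp.coeFn_smul ((starRingEnd ℂ) c) (C f)).symm
  · -- involutive
    intro f
    apply Lp.ext (p := (2:ENNReal)) (μ := hm)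
    calc (C (C f) : UnitCircle → ℂ)
        =ᵐ[hm] cstar2 (⇑(C f)) := hC (C f)
      _ =ᵐ[hm] cstar2 (cstar2 (⇑f)) := cstar2_congr (hC f)
      _ =ᵐ[hm] (⇑f) := Filter.Eventually.of_forall fun x => cstar2_invol (⇑f) x
  · -- inner
    intro f g
    rw [L2.inner_def, L2.inner_def]
    have e1 : (fun a => (inner ℂ ((C f : UnitCircle → ℂ) a) ((C g : UnitCircle → ℂ) a) : ℂ))
        =ᵐ[hm] fun a => (starRingEnd ℂ) (cstar2 (⇑f) a) * cstar2 (⇑g) a := by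
      filter_upwards [hC f, hC g] with a ha hb
      rw [RCLike.inner_apply', ha, hb]
    have e2 : (fun a => (inner ℂ ((g : UnitCircle → ℂ) a) ((f : UnitCircle → ℂ) a) : ℂ))
        =ᵐ[hm] fun a => (starRingEnd ℂ) (g a) * f a :=
      Filter.Eventually.of_forall fun a => RCLike.inner_apply' _ _
    rw [integral_congr_ae e1, integral_congr_ae e2]
    exact inner_comp (Lp.memLp f) (Lp.memLp g)
  · -- commutes with Mz2
    intro f
    apply Lp.ext (p := (2:ENNReal)) (μ := hm)
    calc (C (Mz2 f) : UnitCircle → ℂ)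
        =ᵐ[hm] cstar2 (⇑(Mz2 f)) := hC (Mz2 f)
      _ =ᵐ[hm] cstar2 (fun x => zz x ^ 2 * f x) := cstar2_congr (hMz2 f)
      _ =ᵐ[hm] (fun x => zz x ^ 2 * cstar2 (⇑f) x) :=
          Filter.Eventually.of_forall fun x => cstar2_z2 (⇑f) x
      _ =ᵐ[hm] (fun x => zz x ^ 2 * (C f : UnitCircle → ℂ) x) := by
          filter_upwards [hC f] with x e
          rw [e]
      _ =ᵐ[hm] (Mz2 (C f) : UnitCircle → ℂ) := (hMz2 (C f)).symm
  · -- does not commute with Mz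
    intro hcomm
    set f₀ : L2T := fourierLp (T := 2 * Real.pi) 2 (0 : ℤ) with hf₀def
    have h0 : (f₀ : UnitCircle → ℂ) =ᵐ[hm] fun _ => (1 : ℂ) := by
      refine (coeFn_fourierLp (T := 2 * Real.pi) 2 (0:ℤ)).trans
        (Filter.Eventually.of_forall fun x => ?_)
      exact fourier_zero
    have hA : C (Mz f₀) = fourierLp (T := 2 * Real.pi) 2 (0 : ℤ) := by
      apply Lp.ext (p := (2:ENNReal)) (μ := hm)
      have hz1 : (Mz f₀ : UnitCircle → ℂ) =ᵐ[hm] zz := by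
        filter_upwards [hMz f₀, h0] with x e1 e2
        rw [e1, e2, mul_one]
      calc (C (Mz f₀) : UnitCircle → ℂ)
          =ᵐ[hm] cstar2 (⇑(Mz f₀)) := hC (Mz f₀)
        _ =ᵐ[hm] cstar2 zz := cstar2_congr hz1
        _ =ᵐ[hm] (fun _ => (1:ℂ)) := Filter.Eventually.of_forall fun x => cstar2_zfun x
        _ =ᵐ[hm] (fourierLp (T := 2 * Real.pi) 2 (0 : ℤ) : UnitCircle → ℂ) := by
            have h : (fourierLp (T := 2 * Real.pi) 2 (0 : ℤ) : UnitCircle → ℂ)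
                =ᵐ[hm] fun _ => (1:ℂ) := by
              refine (coeFn_fourierLp (T := 2 * Real.pi) 2 (0:ℤ)).trans
                (Filter.Eventually.of_forall fun x => ?_)
              exact fourier_zero
            exact h.symm
    have hB : Mz (C f₀) = fourierLp (T := 2 * Real.pi) 2 (2 : ℤ) := by
      apply Lp.ext (p := (2:ENNReal)) (μ := hm)
      have hz2 : (C f₀ : UnitCircle → ℂ) =ᵐ[hm] zz := by
        refine (hC f₀).trans ?_
        refine (cstar2_congr h0).trans (Filter.Eventually.of_forall fun x => ?_)
        exact cstar2_one x
      calc (Mz (C f₀) : UnitCircle → ℂ)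
          =ᵐ[hm] (fun x => zz x * (C f₀ : UnitCircle → ℂ) x) := hMz (C f₀)
        _ =ᵐ[hm] (fun x => zz x * zz x) := by
            filter_upwards [hz2] with x e
            rw [e]
        _ =ᵐ[hm] (fourierLp (T := 2 * Real.pi) 2 (2 : ℤ) : UnitCircle → ℂ) := by
            have h : (fourierLp (T := 2 * Real.pi) 2 (2 : ℤ) : UnitCircle → ℂ)
                =ᵐ[hm] fun x => zz x * zz x := by
              refine (coeFn_fourierLp (T := 2 * Real.pi) 2 (2:ℤ)).trans
                (Filter.Eventually.of_forall fun x => ?_)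
              rw [f2_sq]; ring
            exact h.symm
    have heq : fourierLp (T := 2 * Real.pi) 2 (0 : ℤ)
        = fourierLp (T := 2 * Real.pi) 2 (2 : ℤ) := by
      rw [← hA, ← hB]
      exact hcomm f₀
    have ho := orthonormal_fourier (T := 2 * Real.pi)
    have h02 : (inner ℂ (fourierLp (T := 2 * Real.pi) 2 (0:ℤ))
        (fourierLp (T := 2 * Real.pi) 2 (2:ℤ)) : ℂ) = 0 :=
      ho.2 (show (0:ℤ) ≠ 2 by norm_num)
    rw [← heq] at h02
    have := inner_self_eq_zero.mp h02
    have hn := ho.1 (0:ℤ)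
    rw [this] at hn
    simp at hn
end
end

section
/- There is no conjugation C on L²(𝕋) that satisfies C M_{z²} = M_{\bar{z}²} C and maps the Hardy space H² into itself. -/
open MeasureTheory Complex
open scoped Real

noncomputable section

lemma fourierCoeff_congr {f g : UnitCircle → ℂ} (h : f =ᵐ[hm] g) (n : ℤ) :
    fourierCoeff f n = fourierCoeff g n := by
  unfold fourierCoeff
  exact integral_congr_ae (by filter_upwards [h] with x hx; rw [hx])

lemma coeff_shift (f : UnitCircle → ℂ) (m : ℤ) :
    fourierCoeff (fun x => (starRingEnd ℂ) (zz x) ^ 2 * f x) m = fourierCoeff f (m + 2) := by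
  unfold fourierCoeff
  apply integral_congr_ae
  filter_upwards with x
  have h1 : (starRingEnd ℂ) (zz x) = fourier (-1) x := (fourier_neg).symm
  have h2 : (-(m+2) : ℤ) = -m + (-1 + -1) := by ring
  simp only [smul_eq_mul, h1, h2, fourier_add, pow_two]
  ring

lemma hardy_inner_zero {f : L2T} (hf : f ∈ Hardy) {m : ℤ} (hm' : m < 0) :
    (inner ℂ (fourierLp 2 m : L2T) f : ℂ) = 0 := by
  have hker : Hardy ≤ LinearMap.ker ((innerSL ℂ (fourierLp 2 m : L2T)) : L2T →ₗ[ℂ] ℂ) := by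
    apply Submodule.topologicalClosure_minimal
    · rw [Submodule.span_le]
      rintro _ ⟨n, rfl⟩
      simp only [SetLike.mem_coe, LinearMap.mem_ker, ContinuousLinearMap.coe_coe, innerSL_apply_apply]
      exact orthonormal_fourier.2 (by omega)
    · exact ContinuousLinearMap.isClosed_ker (innerSL ℂ (fourierLp 2 m : L2T))
  simpa using hker hf

lemma hardy_repr_zero {f : L2T} (hf : f ∈ Hardy) {m : ℤ} (hm' : m < 0) :
    fourierBasis.repr f m = 0 := by
  rw [HilbertBasis.repr_apply_apply, coe_fourierBasis]
  exact hardy_inner_zero hf hm'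

lemma mem_hardy_nat (n : ℕ) : (fourierLp 2 (n : ℤ) : L2T) ∈ Hardy :=
  Submodule.le_topologicalClosure _ (Submodule.subset_span ⟨n, rfl⟩)

theorem stmt_15' (Mz2 Mzb2 : L2T →L[ℂ] L2T)
    (hMz2 : ∀ f : L2T, (Mz2 f : UnitCircle → ℂ) =ᵐ[hm]
      fun x => zz x ^ 2 * (f : UnitCircle → ℂ) x)
    (hMzb2 : ∀ f : L2T, (Mzb2 f : UnitCircle → ℂ) =ᵐ[hm]
      fun x => (starRingEnd ℂ) (zz x) ^ 2 * (f : UnitCircle → ℂ) x)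
    (hC' : ∃ C : L2T → L2T, (∀ (c : ℂ) (f), C (c • f) = (starRingEnd ℂ) c • C f) ∧
      (∀ f, C (C f) = f) ∧ (∀ f, C (Mz2 f) = Mzb2 (C f)) ∧
      ∀ f : L2T, f ∈ Hardy → C f ∈ Hardy) : False := by
  obtain ⟨C, hsmul, hinv, hcomm, hH⟩ := hC'
  have hC0 : C 0 = 0 := by simpa using hsmul 0 0
  set g : L2T := C (fourierLp 2 (0 : ℤ)) with hg
  have hMzB : ∀ k : ℤ, Mz2 (fourierLp 2 k) = (fourierLp 2 (k + 2) : L2T) := by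
    intro k
    apply Lp.ext
    refine (hMz2 _).trans ?_
    have h1 := coeFn_fourierLp (T := 2 * Real.pi) 2 k
    have h2 := coeFn_fourierLp (T := 2 * Real.pi) 2 (k + 2)
    filter_upwards [h1, h2] with x hx hx2
    rw [hx, hx2]
    have : fourier (k + 2) x = zz x ^ 2 * fourier k x := by
      rw [fourier_add, pow_two]
      have : fourier (2 : ℤ) x = fourier 1 x * fourier 1 x := by
        rw [← fourier_add]; norm_num
      rw [this]; unfold zz; ring
    rw [this]
  have hshift : ∀ (f : L2T) (m : ℤ),
      fourierBasis.repr (Mzb2 f) m = fourierBasis.repr f (m + 2) := by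
    intro f m
    rw [fourierBasis_repr, fourierBasis_repr, fourierCoeff_congr (hMzb2 f) m]
    exact coeff_shift _ m
  have key : ∀ n : ℕ, ∀ m : ℤ, fourierBasis.repr (C (fourierLp 2 (2 * (n : ℤ)))) m
      = fourierBasis.repr g (m + 2 * (n : ℤ)) := by
    intro n
    induction n with
    | zero => intro m; rw [hg]; simp
    | succ n ih =>
      intro m
      calc fourierBasis.repr (C (fourierLp 2 (2 * ((n + 1 : ℕ) : ℤ)))) m
          = fourierBasis.repr (C (Mz2 (fourierLp 2 (2 * (n : ℤ))))) m := by
            rw [show (2 * ((n + 1 : ℕ) : ℤ)) = 2 * (n : ℤ) + 2 by push_cast; ring, ← hMzB]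
        _ = fourierBasis.repr (Mzb2 (C (fourierLp 2 (2 * (n : ℤ))))) m := by rw [hcomm]
        _ = fourierBasis.repr (C (fourierLp 2 (2 * (n : ℤ)))) (m + 2) := hshift _ _
        _ = fourierBasis.repr g (m + 2 + 2 * (n : ℤ)) := ih (m + 2)
        _ = fourierBasis.repr g (m + 2 * ((n + 1 : ℕ) : ℤ)) := by push_cast; ring_nf
  have hzero : ∀ j : ℤ, fourierBasis.repr g j = 0 := by
    intro j
    set n : ℕ := j.toNat + 1 with hn
    have hj : j - 2 * (n : ℤ) < 0 := by
      have h := Int.self_le_toNat j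
      omega
    have h1 := key n (j - 2 * (n : ℤ))
    rw [sub_add_cancel] at h1
    rw [← h1]
    refine hardy_repr_zero ?_ hj
    apply hH
    rw [show (2 * (n : ℤ)) = ((2 * n : ℕ) : ℤ) by push_cast; ring]
    exact mem_hardy_nat _
  have hg0 : g = 0 := by
    have h0 : fourierBasis.repr g = 0 := by
      apply lp.ext
      funext j
      simpa using hzero j
    have := congrArg (fourierBasis (T := 2 * Real.pi)).repr.symm h0
    simpa using this
  have he0 : (fourierLp 2 (0 : ℤ) : L2T) = 0 := by
    rw [← hinv (fourierLp 2 (0 : ℤ)), ← hg, hg0, hC0]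
  have hn1 : ‖(fourierLp 2 (0 : ℤ) : L2T)‖ = 1 := (orthonormal_fourier (T := 2 * Real.pi)).1 (0 : ℤ)
  rw [he0] at hn1
  simp at hn1

/-- There is no conjugation on `L²(𝕋)` intertwining `M_{z²}` and `M_{z̄²}`
that keeps the Hardy space `H²` invariant. -/
theorem stmt_15 (Mz2 Mzb2 : L2T →L[ℂ] L2T)
    (hMz2 : ∀ f : L2T, (Mz2 f : UnitCircle → ℂ) =ᵐ[hm]
      fun x => zz x ^ 2 * (f : UnitCircle → ℂ) x)
    (hMzb2 : ∀ f : L2T, (Mzb2 f : UnitCircle → ℂ) =ᵐ[hm]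
      fun x => (starRingEnd ℂ) (zz x) ^ 2 * (f : UnitCircle → ℂ) x) :
    ¬ ∃ C : L2T → L2T, IsConjugation C ∧ (∀ f, C (Mz2 f) = Mzb2 (C f)) ∧
      ∀ f : L2T, f ∈ Hardy → C f ∈ Hardy := by
  rintro ⟨C, hC, hcomm, hH⟩
  exact stmt_15' Mz2 Mzb2 hMz2 hMzb2 ⟨C, hC.map_smul, hC.involutive, hcomm, hH⟩
end
end

section
/- Let C be a conjugation on L²(𝕋) that commutes with M_{z²}, does not commute with M_z, and maps H² into itself. Then C = M_{[ξ_1,ξ_2]} J* where ξ_1(z) = a_0 + a_1 z and ξ_2(z) = a_1 \bar{z} + b_0 for constants a_0, a_1, b_0 ∈ ℂ satisfying |a_0|² + |a_1|² = 1, |b_0|² + |a_1|² = 1, and a_0\bar{a_1} + a_1\bar{b_0} = 0. -/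
open MeasureTheory Complex
open scoped Real

noncomputable section

namespace S16

local notation "⟪" x ", " y "⟫" => (inner ℂ x y : ℂ)

/-- `π` as a point of the circle. -/
def pp : UnitCircle := ((Real.pi : ℝ) : UnitCircle)

def E (n : ℤ) : L2T := fourierLp 2 n

lemma EB (n : ℤ) : (fourierBasis (T := 2*Real.pi) n : L2T) = E n := congrFun coe_fourierBasis n

lemma E_coe (n : ℤ) : (E n : UnitCircle → ℂ) =ᵐ[hm] fourier n := coeFn_fourierLp 2 n

lemma repr_eq (x : L2T) (n : ℤ) : fourierBasis.repr x n = ⟪E n, x⟫ := by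
  rw [HilbertBasis.repr_apply_apply]
  exact congrArg (fun v : L2T => (inner ℂ v x : ℂ)) (EB n)

lemma ext0 {x y : L2T} (h : ∀ n : ℤ, ⟪E n, x⟫ = ⟪E n, y⟫) : x = y := by
  apply (fourierBasis (T := 2*Real.pi)).repr.injective
  ext n
  rw [repr_eq, repr_eq]
  exact h n

lemma inner_E (m n : ℤ) : ⟪E m, E n⟫ = if m = n then 1 else 0 := by
  simpa [E] using orthonormal_iff_ite.mp (@orthonormal_fourier (2*Real.pi) _) m n

lemma hasSum_E (f : L2T) : HasSum (fun n : ℤ => ⟪E n, f⟫ • E n) f := by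
  have h := (fourierBasis (T := 2*Real.pi)).hasSum_repr f
  have e : (fun i : ℤ => fourierBasis.repr f i • (fourierBasis (T := 2*Real.pi) i : L2T))
      = fun n : ℤ => ⟪E n, f⟫ • E n := by
    funext n
    rw [repr_eq]
    exact congrArg (fun v : L2T => ⟪E n, f⟫ • v) (EB n)
  rwa [e] at h

lemma inner_E_eq_integral (n : ℤ) (g : L2T) :
    ⟪E n, g⟫ = ∫ x, fourier (-n) x * (g : UnitCircle → ℂ) x ∂hm := by
  rw [MeasureTheory.L2.inner_def]
  apply integral_congr_ae
  filter_upwards [E_coe n] with x hx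
  rw [RCLike.inner_apply, hx, ← fourier_neg]
  exact mul_comm _ _

lemma gamma_eq (f : L2T) (n : ℤ) : ⟪E n, f⟫ = fourierCoeff (f : UnitCircle → ℂ) n := by
  rw [← repr_eq]; exact fourierBasis_repr f n

lemma E_mem_Hardy {n : ℤ} (hn : 0 ≤ n) : E n ∈ Hardy := by
  apply Submodule.le_topologicalClosure
  apply Submodule.subset_span
  exact ⟨n.toNat, by simp [E, Int.toNat_of_nonneg hn]⟩

lemma inner_E_Hardy {n : ℤ} (hn : n < 0) {g : L2T} (hg : g ∈ Hardy) : ⟪E n, g⟫ = 0 := by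
  have hle : Hardy ≤ (innerSL ℂ (E n)).ker := by
    apply Submodule.topologicalClosure_minimal
    · rw [Submodule.span_le]
      rintro g ⟨m, rfl⟩
      simp only [SetLike.mem_coe, LinearMap.mem_ker, ContinuousLinearMap.coe_coe, innerSL_apply_apply]
      have h := inner_E n (m : ℤ)
      rw [if_neg (by omega)] at h
      exact h
    · exact ContinuousLinearMap.isClosed_ker _
  simpa using hle hg

lemma fourier_addx (n : ℤ) (x y : UnitCircle) : fourier n (x + y) = fourier n x * fourier n y := by
  simp [fourier_apply, smul_add, AddCircle.toCircle_add]

lemma fourier_negx (n : ℤ) (x : UnitCircle) : fourier n (-x) = fourier (-n) x := by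
  rw [fourier_apply, fourier_apply, smul_neg, neg_smul]

lemma fourier_pi (n : ℤ) : fourier n pp = (-1 : ℂ) ^ n := by
  rw [pp, fourier_coe_apply]
  rw [show 2 * ↑π * I * ↑n * ↑π / ↑(2 * π) = ↑n * (↑π * I) by
    have : (π : ℂ) ≠ 0 := by exact_mod_cast Real.pi_ne_zero
    push_cast
    field_simp]
  rw [Complex.exp_int_mul, Complex.exp_pi_mul_I]

lemma neg_one_zpow_neg (n : ℤ) : (-1 : ℂ) ^ (-n) = (-1 : ℂ) ^ n := by
  have h : (-1 : ℂ) ^ n * (-1 : ℂ) ^ n = 1 := by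
    rw [← zpow_add₀ (by norm_num : (-1 : ℂ) ≠ 0), show n + n = 2 * n by ring, zpow_mul]
    norm_num
  rw [zpow_neg]
  exact inv_eq_of_mul_eq_one_left h

lemma zpE (k : ℤ) : (-1 : ℂ) ^ (2 * k) = 1 := by
  rw [zpow_mul]; norm_num

lemma zpO (k : ℤ) : (-1 : ℂ) ^ (2 * k + 1) = -1 := by
  rw [zpow_add₀ (by norm_num : (-1 : ℂ) ≠ 0), zpE]; norm_num

lemma int_w1 (f : L2T) (j : ℤ) :
    ∫ x, fourier j x * (starRingEnd ℂ) ((f : UnitCircle → ℂ) (-x)) ∂hm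
      = (starRingEnd ℂ) (fourierCoeff (f : UnitCircle → ℂ) (-j)) := by
  have h1 := MeasureTheory.integral_neg_eq_self
    (fun y : UnitCircle => fourier j (-y) * (starRingEnd ℂ) ((f : UnitCircle → ℂ) y)) hm
  simp only [neg_neg] at h1
  rw [h1]
  have h2 : (fun y : UnitCircle => fourier j (-y) * (starRingEnd ℂ) ((f : UnitCircle → ℂ) y))
      = fun y : UnitCircle => (starRingEnd ℂ) (fourier j y * (f : UnitCircle → ℂ) y) := by
    funext y
    rw [map_mul, fourier_negx, fourier_neg]
  rw [h2, integral_conj]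
  congr 1
  rw [fourierCoeff]
  simp [neg_neg, smul_eq_mul]

lemma int_w2 (f : L2T) (j : ℤ) :
    ∫ x, fourier j x * (starRingEnd ℂ) ((f : UnitCircle → ℂ) (-(x + pp))) ∂hm
      = (-1 : ℂ) ^ j * (starRingEnd ℂ) (fourierCoeff (f : UnitCircle → ℂ) (-j)) := by
  have h1 := MeasureTheory.integral_add_right_eq_self (μ := hm)
    (fun y : UnitCircle => fourier j (y - pp) * (starRingEnd ℂ) ((f : UnitCircle → ℂ) (-y))) pp
  simp only [add_sub_cancel_right] at h1
  rw [h1]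
  have h2 : (fun y : UnitCircle => fourier j (y - pp) * (starRingEnd ℂ) ((f : UnitCircle → ℂ) (-y)))
      = fun y : UnitCircle =>
        (-1 : ℂ) ^ j * (fourier j y * (starRingEnd ℂ) ((f : UnitCircle → ℂ) (-y))) := by
    funext y
    rw [sub_eq_add_neg, fourier_addx, fourier_negx, fourier_pi, neg_one_zpow_neg]
    ring
  rw [h2, integral_const_mul, int_w1]

lemma norm_fourier_pt (k : ℤ) (x : UnitCircle) : ‖fourier k x‖ = 1 := by
  simp [fourier_apply, Circle.norm_coe]

lemma memLp_mul_fourier {w : UnitCircle → ℂ} (hw : MemLp w 2 hm) (k : ℤ) :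
    MemLp (fun x => fourier k x * w x) 2 hm := by
  refine MemLp.of_le hw ?_ ?_
  · exact ((map_continuous (fourier k)).aestronglyMeasurable).mul hw.aestronglyMeasurable
  · refine Filter.Eventually.of_forall fun x => ?_
    rw [norm_mul, norm_fourier_pt, one_mul]

lemma memLp_conj {w : UnitCircle → ℂ} (hw : MemLp w 2 hm) :
    MemLp (fun x => (starRingEnd ℂ) (w x)) 2 hm := by
  refine MemLp.of_le hw ?_ ?_
  · exact continuous_star.comp_aestronglyMeasurable hw.aestronglyMeasurable
  · exact Filter.Eventually.of_forall fun x => by simp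

lemma memLp_w1 (f : L2T) :
    MemLp (fun x => (starRingEnd ℂ) ((f : UnitCircle → ℂ) (-x))) 2 hm :=
  memLp_conj ((Lp.memLp f).comp_measurePreserving (Measure.measurePreserving_neg hm))

lemma memLp_w2 (f : L2T) :
    MemLp (fun x => (starRingEnd ℂ) ((f : UnitCircle → ℂ) (-(x + pp)))) 2 hm :=
  memLp_conj (((Lp.memLp f).comp_measurePreserving
    (Measure.measurePreserving_neg hm)).comp_measurePreserving
      (measurePreserving_add_right hm pp))

lemma Mz2_E (Mz2 : L2T →L[ℂ] L2T)
    (hMz2 : ∀ f : L2T, (Mz2 f : UnitCircle → ℂ) =ᵐ[hm]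
      fun x => zz x ^ 2 * (f : UnitCircle → ℂ) x) (n : ℤ) :
    Mz2 (E n) = E (n + 2) := by
  apply Lp.ext
  filter_upwards [hMz2 (E n), E_coe n, E_coe (n + 2)] with x h1 h2 h3
  simp only [h1, h2, h3]
  rw [show n + 2 = 1 + (1 + n) by ring, fourier_add, fourier_add]
  simp only [zz]
  rw [show (fourier 1 x : ℂ) ^ 2 = fourier 1 x * fourier 1 x by ring]
  ring

lemma adj (Mz2 : L2T →L[ℂ] L2T)
    (hMz2 : ∀ f : L2T, (Mz2 f : UnitCircle → ℂ) =ᵐ[hm]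
      fun x => zz x ^ 2 * (f : UnitCircle → ℂ) x) (n : ℤ) (g : L2T) :
    ⟪E n, Mz2 g⟫ = ⟪E (n - 2), g⟫ := by
  rw [inner_E_eq_integral, inner_E_eq_integral]
  apply integral_congr_ae
  filter_upwards [hMz2 g] with x h1
  simp only [h1]
  rw [show -(n - 2) = 1 + (1 + -n) by ring, fourier_add, fourier_add]
  simp only [zz]
  rw [show (fourier 1 x : ℂ) ^ 2 = fourier 1 x * fourier 1 x by ring]
  ring

lemma normC (C : L2T → L2T) (hC : IsConjugation C) (f : L2T) : ‖C f‖ = ‖f‖ := by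
  have h := hC.inner_eq f f
  rw [inner_self_eq_norm_sq_to_K, inner_self_eq_norm_sq_to_K] at h
  have h2 : (‖C f‖ ^ 2 : ℝ) = ‖f‖ ^ 2 := by exact_mod_cast h
  nlinarith [norm_nonneg (C f), norm_nonneg f]

lemma real_smul_eq (r : ℝ) (g : L2T) : r • g = ((r : ℂ)) • g := by
  rw [show ((r : ℝ) : ℂ) = r • (1 : ℂ) by simp [Complex.real_smul], smul_assoc, one_smul]

def CR (C : L2T → L2T) (hC : IsConjugation C) : L2T →L[ℝ] L2T :=
  LinearMap.mkContinuous
    { toFun := C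
      map_add' := hC.map_add
      map_smul' := by
        intro r f
        show C (r • f) = r • C f
        rw [real_smul_eq r f, hC.map_smul, Complex.conj_ofReal,
          ← real_smul_eq r (C f)] } 1
    fun f => by
      show ‖C f‖ ≤ 1 * ‖f‖
      rw [normC C hC f, one_mul]

lemma hsymm (C : L2T → L2T) (hC : IsConjugation C) (x y : L2T) : ⟪x, C y⟫ = ⟪y, C x⟫ := by
  have h := hC.inner_eq (C x) y
  rwa [hC.involutive] at h

lemma hasSum_C (C : L2T → L2T) (hC : IsConjugation C) (f : L2T) :
    HasSum (fun n : ℤ => (starRingEnd ℂ) ⟪E n, f⟫ • C (E n)) (C f) := by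
  have h := (hasSum_E f).mapL (CR C hC)
  have e : (fun n : ℤ => (CR C hC) (⟪E n, f⟫ • E n))
      = fun n : ℤ => (starRingEnd ℂ) ⟪E n, f⟫ • C (E n) := by
    funext n
    exact hC.map_smul _ _
  rw [e] at h
  exact h

end S16

/-- A conjugation commuting with `M_{z²}` but not with `M_z` that keeps `H²`
invariant has the form `M_{[ξ₁,ξ₂]} J*` with `ξ₁ = a₀ + a₁ z`,
`ξ₂ = a₁ z̄ + b₀` and the stated relations among `a₀, a₁, b₀`. -/
theorem stmt_16 (Mz Mz2 : L2T →L[ℂ] L2T)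
    (hMz : ∀ f : L2T, (Mz f : UnitCircle → ℂ) =ᵐ[hm]
      fun x => zz x * (f : UnitCircle → ℂ) x)
    (hMz2 : ∀ f : L2T, (Mz2 f : UnitCircle → ℂ) =ᵐ[hm]
      fun x => zz x ^ 2 * (f : UnitCircle → ℂ) x)
    (C : L2T → L2T) (hC : IsConjugation C)
    (hcomm : ∀ f, C (Mz2 f) = Mz2 (C f))
    (hnot : ¬ ∀ f, C (Mz f) = Mz (C f))
    (hH : ∀ f : L2T, f ∈ Hardy → C f ∈ Hardy) :
    ∃ a0 a1 b0 : ℂ,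
      ‖a0‖ ^ 2 + ‖a1‖ ^ 2 = 1 ∧ ‖b0‖ ^ 2 + ‖a1‖ ^ 2 = 1 ∧
      a0 * (starRingEnd ℂ) a1 + a1 * (starRingEnd ℂ) b0 = 0 ∧
      ∀ f : L2T, (C f : UnitCircle → ℂ) =ᵐ[hm]
        mul2 (fun x => a0 + a1 * zz x) (fun x => a1 * (starRingEnd ℂ) (zz x) + b0)
          (jstar (f : UnitCircle → ℂ)) := by
  classical
  have hMz2E : ∀ n : ℤ, Mz2 (S16.E n) = S16.E (n + 2) := S16.Mz2_E Mz2 hMz2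
  have hadj : ∀ (n : ℤ) (g : L2T),
      (inner ℂ (S16.E n) (Mz2 g) : ℂ) = inner ℂ (S16.E (n - 2)) g := S16.adj Mz2 hMz2
  have hsym : ∀ x y : L2T, (inner ℂ x (C y) : ℂ) = inner ℂ y (C x) := S16.hsymm C hC
  have hMz2inj : Function.Injective Mz2 := by
    intro x y hxy
    apply S16.ext0
    intro n
    have h1 := hadj (n + 2) x
    have h2 := hadj (n + 2) y
    rw [show n + 2 - 2 = n by ring] at h1 h2
    rw [← h1, ← h2, hxy]
  have hstep : ∀ n : ℤ, C (S16.E (n + 2)) = Mz2 (C (S16.E n)) := by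
    intro n
    rw [← hMz2E n, hcomm]
  set a0 : ℂ := inner ℂ (S16.E 0) (C (S16.E 0)) with ha0
  set a1 : ℂ := inner ℂ (S16.E 1) (C (S16.E 0)) with ha1
  set b0 : ℂ := inner ℂ (S16.E 1) (C (S16.E 1)) with hb0
  have hCE_Hardy : ∀ n : ℤ, 0 ≤ n → C (S16.E n) ∈ Hardy := fun n hn =>
    hH _ (S16.E_mem_Hardy hn)
  have hvan : ∀ m n : ℤ, 0 ≤ m → m ≤ 1 → (n < 0 ∨ 2 ≤ n) →
      (inner ℂ (S16.E n) (C (S16.E m)) : ℂ) = 0 := by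
    intro m n hm hm1 h
    rcases h with h | h
    · exact S16.inner_E_Hardy h (hCE_Hardy m hm)
    · have e1 : C (S16.E m) = Mz2 (C (S16.E (m - 2))) := by
        rw [← hstep (m - 2), show m - 2 + 2 = m by ring]
      rw [e1, hadj, hsym]
      exact S16.inner_E_Hardy (by omega : m - 2 < 0) (hCE_Hardy (n - 2) (by omega))
  have hu0 : C (S16.E 0) = a0 • S16.E 0 + a1 • S16.E 1 := by
    apply S16.ext0
    intro n
    rw [inner_add_right, inner_smul_right, inner_smul_right, S16.inner_E, S16.inner_E]
    by_cases h0 : n = 0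
    · subst h0
      rw [if_pos rfl, if_neg (by norm_num), mul_one, mul_zero, add_zero, ← ha0]
    by_cases h1 : n = 1
    · subst h1
      rw [if_neg (by norm_num), if_pos rfl, mul_one, mul_zero, zero_add, ← ha1]
    · rw [if_neg h0, if_neg h1, mul_zero, mul_zero, add_zero]
      exact hvan 0 n le_rfl (by norm_num) (by omega)
  have hu1 : C (S16.E 1) = a1 • S16.E 0 + b0 • S16.E 1 := by
    apply S16.ext0
    intro n
    rw [inner_add_right, inner_smul_right, inner_smul_right, S16.inner_E, S16.inner_E]
    by_cases h0 : n = 0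
    · subst h0
      rw [if_pos rfl, if_neg (by norm_num), mul_one, mul_zero, add_zero]
      rw [hsym (S16.E 0) (S16.E 1), ← ha1]
    by_cases h1 : n = 1
    · subst h1
      rw [if_neg (by norm_num), if_pos rfl, mul_one, mul_zero, zero_add, ← hb0]
    · rw [if_neg h0, if_neg h1, mul_zero, mul_zero, add_zero]
      exact hvan 1 n (by norm_num) le_rfl (by omega)
  have huform : ∀ k : ℤ,
      C (S16.E (2 * k)) = a0 • S16.E (2 * k) + a1 • S16.E (2 * k + 1)
      ∧ C (S16.E (2 * k + 1)) = a1 • S16.E (2 * k) + b0 • S16.E (2 * k + 1) := by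
    intro k
    induction k using Int.induction_on with
    | zero =>
      constructor
      · rw [show (2 * (0:ℤ) + 1) = 1 by ring, show (2 * (0:ℤ)) = 0 by ring]
        exact hu0
      · rw [show (2 * (0:ℤ) + 1) = 1 by ring, show (2 * (0:ℤ)) = 0 by ring]
        exact hu1
    | succ i ih =>
      constructor
      · rw [show (2 * ((i:ℤ) + 1)) = 2 * (i:ℤ) + 2 by ring,
          show (2 * (i:ℤ) + 2 + 1) = (2 * (i:ℤ) + 1) + 2 by ring,
          hstep, ih.1, map_add, _root_.map_smul, _root_.map_smul, hMz2E, hMz2E]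
      · rw [show (2 * ((i:ℤ) + 1) + 1) = (2 * (i:ℤ) + 1) + 2 by ring,
          show (2 * ((i:ℤ) + 1)) = 2 * (i:ℤ) + 2 by ring,
          hstep, ih.2, map_add, _root_.map_smul, _root_.map_smul, hMz2E, hMz2E]
    | pred i ih =>
      constructor
      · apply hMz2inj
        rw [map_add, _root_.map_smul, _root_.map_smul, hMz2E, hMz2E, ← hstep,
          show (2 * (-(i:ℤ) - 1) + 2) = 2 * (-(i:ℤ)) by ring,
          show (2 * (-(i:ℤ) - 1) + 1 + 2) = 2 * (-(i:ℤ)) + 1 by ring]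
        exact ih.1
      · apply hMz2inj
        rw [map_add, _root_.map_smul, _root_.map_smul, hMz2E, hMz2E, ← hstep,
          show (2 * (-(i:ℤ) - 1) + 1 + 2) = 2 * (-(i:ℤ)) + 1 by ring,
          show (2 * (-(i:ℤ) - 1) + 2) = 2 * (-(i:ℤ)) by ring]
        exact ih.2
  -- scalar relations
  have hnorm0 : (starRingEnd ℂ) a0 * a0 + (starRingEnd ℂ) a1 * a1 = 1 := by
    have h := hC.inner_eq (S16.E 0) (S16.E 0)
    rw [S16.inner_E, if_pos rfl, hu0] at h
    simp only [inner_add_left, inner_add_right, inner_smul_left, inner_smul_right,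
      S16.inner_E] at h
    norm_num at h
    linear_combination h
  have hnorm1 : (starRingEnd ℂ) a1 * a1 + (starRingEnd ℂ) b0 * b0 = 1 := by
    have h := hC.inner_eq (S16.E 1) (S16.E 1)
    rw [S16.inner_E, if_pos rfl, hu1] at h
    simp only [inner_add_left, inner_add_right, inner_smul_left, inner_smul_right,
      S16.inner_E] at h
    norm_num at h
    linear_combination h
  have horth : (starRingEnd ℂ) a0 * a1 + (starRingEnd ℂ) a1 * b0 = 0 := by
    have h := hC.inner_eq (S16.E 0) (S16.E 1)
    rw [S16.inner_E, if_neg (by norm_num), hu0, hu1] at h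
    simp only [inner_add_left, inner_add_right, inner_smul_left, inner_smul_right,
      S16.inner_E] at h
    norm_num at h
    linear_combination h
  have cm : ∀ z : ℂ, (starRingEnd ℂ) z * z = ((‖z‖ ^ 2 : ℝ) : ℂ) := fun z => by
    rw [mul_comm, Complex.mul_conj, Complex.normSq_eq_norm_sq]
  refine ⟨a0, a1, b0, ?_, ?_, ?_, ?_⟩
  · have h := hnorm0
    rw [cm, cm] at h
    exact_mod_cast h
  · have h := hnorm1
    rw [cm, cm] at h
    have h2 : ‖a1‖ ^ 2 + ‖b0‖ ^ 2 = 1 := by exact_mod_cast h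
    linarith
  · have h := congrArg (starRingEnd ℂ) horth
    simpa using h
  -- the main a.e. identity
  intro f
  set γ : ℤ → ℂ := fun n => (inner ℂ (S16.E n) f : ℂ) with hγ
  -- Fourier coefficients of C f
  have hCfE : ∀ m : ℤ, HasSum
      (fun n : ℤ => (starRingEnd ℂ) (γ n) * (inner ℂ (S16.E m) (C (S16.E n)) : ℂ))
      ((inner ℂ (S16.E m) (C f) : ℂ)) := by
    intro m
    have h := (S16.hasSum_C C hC f).mapL (innerSL ℂ (S16.E m))
    simp only [innerSL_apply_apply, inner_smul_right] at h
    exact h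
  have hLeven : ∀ k : ℤ, (inner ℂ (S16.E (2 * k)) (C f) : ℂ)
      = (starRingEnd ℂ) (γ (2 * k)) * a0 + (starRingEnd ℂ) (γ (2 * k + 1)) * a1 := by
    intro k
    have h := hCfE (2 * k)
    have hsupp : ∀ n ∉ ({2 * k, 2 * k + 1} : Finset ℤ),
        (starRingEnd ℂ) (γ n) * (inner ℂ (S16.E (2 * k)) (C (S16.E n)) : ℂ) = 0 := by
      intro n hn
      simp only [Finset.mem_insert, Finset.mem_singleton, not_or] at hn
      rcases Int.even_or_odd n with ⟨j, hj⟩ | ⟨j, hj⟩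
      · rw [show n = 2 * j by omega, (huform j).1, inner_add_right, inner_smul_right,
          inner_smul_right, S16.inner_E, S16.inner_E, if_neg (by omega), if_neg (by omega)]
        ring
      · rw [show n = 2 * j + 1 by omega, (huform j).2, inner_add_right, inner_smul_right,
          inner_smul_right, S16.inner_E, S16.inner_E, if_neg (by omega), if_neg (by omega)]
        ring
    have heq := h.unique (hasSum_sum_of_ne_finset_zero hsupp)
    rw [Finset.sum_pair (by omega : (2 * k : ℤ) ≠ 2 * k + 1)] at heq
    have hv1 : (inner ℂ (S16.E (2 * k)) (C (S16.E (2 * k))) : ℂ) = a0 := by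
      rw [(huform k).1, inner_add_right, inner_smul_right, inner_smul_right,
        S16.inner_E, S16.inner_E, if_pos rfl, if_neg (by omega)]
      ring
    have hv2 : (inner ℂ (S16.E (2 * k)) (C (S16.E (2 * k + 1))) : ℂ) = a1 := by
      rw [(huform k).2, inner_add_right, inner_smul_right, inner_smul_right,
        S16.inner_E, S16.inner_E, if_pos rfl, if_neg (by omega)]
      ring
    rw [heq, hv1, hv2]
  have hLodd : ∀ k : ℤ, (inner ℂ (S16.E (2 * k + 1)) (C f) : ℂ)
      = (starRingEnd ℂ) (γ (2 * k)) * a1 + (starRingEnd ℂ) (γ (2 * k + 1)) * b0 := by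
    intro k
    have h := hCfE (2 * k + 1)
    have hsupp : ∀ n ∉ ({2 * k, 2 * k + 1} : Finset ℤ),
        (starRingEnd ℂ) (γ n) * (inner ℂ (S16.E (2 * k + 1)) (C (S16.E n)) : ℂ) = 0 := by
      intro n hn
      simp only [Finset.mem_insert, Finset.mem_singleton, not_or] at hn
      rcases Int.even_or_odd n with ⟨j, hj⟩ | ⟨j, hj⟩
      · rw [show n = 2 * j by omega, (huform j).1, inner_add_right, inner_smul_right,
          inner_smul_right, S16.inner_E, S16.inner_E, if_neg (by omega), if_neg (by omega)]
        ring
      · rw [show n = 2 * j + 1 by omega, (huform j).2, inner_add_right, inner_smul_right,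
          inner_smul_right, S16.inner_E, S16.inner_E, if_neg (by omega), if_neg (by omega)]
        ring
    have heq := h.unique (hasSum_sum_of_ne_finset_zero hsupp)
    rw [Finset.sum_pair (by omega : (2 * k : ℤ) ≠ 2 * k + 1)] at heq
    have hv1 : (inner ℂ (S16.E (2 * k + 1)) (C (S16.E (2 * k))) : ℂ) = a1 := by
      rw [(huform k).1, inner_add_right, inner_smul_right, inner_smul_right,
        S16.inner_E, S16.inner_E, if_neg (by omega), if_pos rfl]
      ring
    have hv2 : (inner ℂ (S16.E (2 * k + 1)) (C (S16.E (2 * k + 1))) : ℂ) = b0 := by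
      rw [(huform k).2, inner_add_right, inner_smul_right, inner_smul_right,
        S16.inner_E, S16.inner_E, if_neg (by omega), if_pos rfl]
      ring
    rw [heq, hv1, hv2]
  -- the candidate function
  set w1 : UnitCircle → ℂ := fun x => (starRingEnd ℂ) ((f : UnitCircle → ℂ) (-x)) with hw1d
  set w2 : UnitCircle → ℂ :=
    fun x => (starRingEnd ℂ) ((f : UnitCircle → ℂ) (-(x + S16.pp))) with hw2d
  set G : UnitCircle → ℂ := fun x =>
    (a0 + b0) / 2 * w1 x + ((a1 / 2) * (fourier 1 x * w1 x)
      + ((a1 / 2) * (fourier (-1) x * w1 x) + ((a0 - b0) / 2 * w2 x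
        + ((a1 / 2) * (fourier 1 x * w2 x)
          + (-(a1 / 2)) * (fourier (-1) x * w2 x))))) with hGd
  have hmw1 : MemLp w1 2 hm := S16.memLp_w1 f
  have hmw2 : MemLp w2 2 hm := S16.memLp_w2 f
  have hG : MemLp G 2 hm := by
    refine (hmw1.const_mul _).add (((S16.memLp_mul_fourier hmw1 1).const_mul _).add
      (((S16.memLp_mul_fourier hmw1 (-1)).const_mul _).add ((hmw2.const_mul _).add
        (((S16.memLp_mul_fourier hmw2 1).const_mul _).add
          ((S16.memLp_mul_fourier hmw2 (-1)).const_mul _)))))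
  have hγc : ∀ n : ℤ, fourierCoeff (f : UnitCircle → ℂ) n = γ n :=
    fun n => (S16.gamma_eq f n).symm
  have hR : ∀ n : ℤ, (inner ℂ (S16.E n) (hG.toLp G) : ℂ)
      = (a0 + b0) / 2 * ((starRingEnd ℂ) (γ n))
        + ((a1 / 2) * ((starRingEnd ℂ) (γ (n - 1)))
        + ((a1 / 2) * ((starRingEnd ℂ) (γ (n + 1)))
        + ((a0 - b0) / 2 * ((-1 : ℂ) ^ (-n) * (starRingEnd ℂ) (γ n))
        + ((a1 / 2) * ((-1 : ℂ) ^ (1 + -n) * (starRingEnd ℂ) (γ (n - 1)))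
        + (-(a1 / 2)) * ((-1 : ℂ) ^ (-1 + -n) * (starRingEnd ℂ) (γ (n + 1))))))) := by
    intro n
    rw [S16.inner_E_eq_integral]
    have hcongr : ∫ x, fourier (-n) x * (hG.toLp G : UnitCircle → ℂ) x ∂hm
        = ∫ x, fourier (-n) x * G x ∂hm := by
      apply integral_congr_ae
      filter_upwards [hG.coeFn_toLp] with x hx
      rw [hx]
    rw [hcongr]
    have hsplit : (fun x => fourier (-n) x * G x) = fun x =>
        (a0 + b0) / 2 * (fourier (-n) x * w1 x)
          + ((a1 / 2) * (fourier (1 + -n) x * w1 x)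
          + ((a1 / 2) * (fourier (-1 + -n) x * w1 x)
          + ((a0 - b0) / 2 * (fourier (-n) x * w2 x)
          + ((a1 / 2) * (fourier (1 + -n) x * w2 x)
          + (-(a1 / 2)) * (fourier (-1 + -n) x * w2 x))))) := by
      funext x
      simp only [hGd]
      rw [fourier_add (m := 1) (n := -n), fourier_add (m := -1) (n := -n)]
      ring
    rw [hsplit]
    have i1 : Integrable (fun x => fourier (-n) x * w1 x) hm :=
      (S16.memLp_mul_fourier hmw1 (-n)).integrable one_le_two
    have i2 : Integrable (fun x => fourier (1 + -n) x * w1 x) hm :=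
      (S16.memLp_mul_fourier hmw1 (1 + -n)).integrable one_le_two
    have i3 : Integrable (fun x => fourier (-1 + -n) x * w1 x) hm :=
      (S16.memLp_mul_fourier hmw1 (-1 + -n)).integrable one_le_two
    have i4 : Integrable (fun x => fourier (-n) x * w2 x) hm :=
      (S16.memLp_mul_fourier hmw2 (-n)).integrable one_le_two
    have i5 : Integrable (fun x => fourier (1 + -n) x * w2 x) hm :=
      (S16.memLp_mul_fourier hmw2 (1 + -n)).integrable one_le_two
    have i6 : Integrable (fun x => fourier (-1 + -n) x * w2 x) hm :=
      (S16.memLp_mul_fourier hmw2 (-1 + -n)).integrable one_le_two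
    have j1 : Integrable (fun x => (a0 + b0) / 2 * (fourier (-n) x * w1 x)) hm := by
      exact i1.const_mul _
    have j2 : Integrable (fun x => (a1 / 2) * (fourier (1 + -n) x * w1 x)) hm := by
      exact i2.const_mul _
    have j3 : Integrable (fun x => (a1 / 2) * (fourier (-1 + -n) x * w1 x)) hm := by
      exact i3.const_mul _
    have j4 : Integrable (fun x => (a0 - b0) / 2 * (fourier (-n) x * w2 x)) hm := by
      exact i4.const_mul _
    have j5 : Integrable (fun x => (a1 / 2) * (fourier (1 + -n) x * w2 x)) hm := by
      exact i5.const_mul _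
    have j6 : Integrable (fun x => (-(a1 / 2)) * (fourier (-1 + -n) x * w2 x)) hm := by
      exact i6.const_mul _
    have s5 : Integrable (fun x => (a1 / 2) * (fourier (1 + -n) x * w2 x)
        + (-(a1 / 2)) * (fourier (-1 + -n) x * w2 x)) hm := by exact j5.add j6
    have s4 : Integrable (fun x => (a0 - b0) / 2 * (fourier (-n) x * w2 x)
        + ((a1 / 2) * (fourier (1 + -n) x * w2 x)
          + (-(a1 / 2)) * (fourier (-1 + -n) x * w2 x))) hm := by exact j4.add s5
    have s3 : Integrable (fun x => (a1 / 2) * (fourier (-1 + -n) x * w1 x)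
        + ((a0 - b0) / 2 * (fourier (-n) x * w2 x)
          + ((a1 / 2) * (fourier (1 + -n) x * w2 x)
            + (-(a1 / 2)) * (fourier (-1 + -n) x * w2 x)))) hm := by exact j3.add s4
    have s2 : Integrable (fun x => (a1 / 2) * (fourier (1 + -n) x * w1 x)
        + ((a1 / 2) * (fourier (-1 + -n) x * w1 x)
          + ((a0 - b0) / 2 * (fourier (-n) x * w2 x)
            + ((a1 / 2) * (fourier (1 + -n) x * w2 x)
              + (-(a1 / 2)) * (fourier (-1 + -n) x * w2 x))))) hm := by exact j2.add s3
    rw [integral_add j1 s2, integral_add j2 s3, integral_add j3 s4, integral_add j4 s5,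
      integral_add j5 j6]
    rw [integral_const_mul, integral_const_mul, integral_const_mul, integral_const_mul,
      integral_const_mul, integral_const_mul]
    simp only [hw1d, hw2d]
    rw [S16.int_w1 f (-n), S16.int_w1 f (1 + -n), S16.int_w1 f (-1 + -n),
      S16.int_w2 f (-n), S16.int_w2 f (1 + -n), S16.int_w2 f (-1 + -n)]
    rw [show -(-n) = n by ring, show -(1 + -n) = n - 1 by ring,
      show -(-1 + -n) = n + 1 by ring]
    rw [hγc n, hγc (n - 1), hγc (n + 1)]
  have hReven : ∀ k : ℤ, (inner ℂ (S16.E (2 * k)) (hG.toLp G) : ℂ)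
      = (starRingEnd ℂ) (γ (2 * k)) * a0 + (starRingEnd ℂ) (γ (2 * k + 1)) * a1 := by
    intro k
    rw [hR (2 * k)]
    rw [show ((1 + -(2 * k)) : ℤ) = 2 * (-k) + 1 by ring, S16.zpO,
      show ((-1 + -(2 * k)) : ℤ) = 2 * (-k - 1) + 1 by ring, S16.zpO,
      show (-(2 * k) : ℤ) = 2 * (-k) by ring, S16.zpE]
    ring
  have hRodd : ∀ k : ℤ, (inner ℂ (S16.E (2 * k + 1)) (hG.toLp G) : ℂ)
      = (starRingEnd ℂ) (γ (2 * k)) * a1 + (starRingEnd ℂ) (γ (2 * k + 1)) * b0 := by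
    intro k
    rw [hR (2 * k + 1)]
    rw [show ((1 + -(2 * k + 1)) : ℤ) = 2 * (-k) by ring, S16.zpE,
      show ((-1 + -(2 * k + 1)) : ℤ) = 2 * (-k - 1) by ring, S16.zpE,
      show (-(2 * k + 1) : ℤ) = 2 * (-k - 1) + 1 by ring, S16.zpO,
      show ((2 * k + 1 - 1) : ℤ) = 2 * k by ring]
    ring
  have hfinal : C f = hG.toLp G := by
    apply S16.ext0
    intro n
    rcases Int.even_or_odd n with ⟨k, hk⟩ | ⟨k, hk⟩
    · rw [show n = 2 * k by omega, hLeven k, hReven k]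
    · rw [show n = 2 * k + 1 by omega, hLodd k, hRodd k]
  have h1 : (C f : UnitCircle → ℂ) =ᵐ[hm] G := by
    rw [hfinal]
    exact hG.coeFn_toLp
  refine h1.trans (Filter.EventuallyEq.of_eq ?_)
  funext x
  simp only [hGd, hw1d, hw2d, mul2, evenPart, oddPart, jstar, zz, S16.pp]
  rw [show (fourier (-1) x : ℂ) = (starRingEnd ℂ) (fourier 1 x) from fourier_neg]
  ring
end
end

section
/- If C is a conjugation on L²(𝕋) satisfying C M_{z²} = M_{\bar{z}²} C, then M_z C M_{\bar{z}} is also a conjugation on L²(𝕋) intertwining M_{z²} and M_{\bar{z}²}, and M_z C M_{\bar{z}} = M_{[z²ψ_2, z²ψ_1]} J whenever C = M_{[ψ_1,ψ_2]} J. -/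
open MeasureTheory Complex
open scoped Real

noncomputable section

lemma zconj (x : UnitCircle) : (starRingEnd ℂ) (zz x) * zz x = 1 := by
  rw [zz, ← fourier_neg, ← fourier_add]
  norm_num [fourier_zero]

lemma zz_pi : zz (((Real.pi : ℝ) : UnitCircle)) = -1 := by
  rw [zz, fourier_coe_apply]
  have hπ : (Real.pi : ℂ) ≠ 0 := by exact_mod_cast Real.pi_ne_zero
  rw [show 2 * (Real.pi:ℂ) * Complex.I * ((1:ℤ):ℂ) * (Real.pi:ℝ) / ((2 * Real.pi : ℝ):ℂ)
      = Real.pi * Complex.I by push_cast; field_simp]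
  exact Complex.exp_pi_mul_I

lemma zz_shift (x : UnitCircle) : zz (x + ((Real.pi : ℝ) : UnitCircle)) = - zz x := by
  have h : zz (x + ((Real.pi : ℝ) : UnitCircle)) = zz x * zz (((Real.pi : ℝ) : UnitCircle)) := by
    simp only [zz, fourier_one, AddCircle.toCircle_add]
    push_cast
    ring
  rw [h, zz_pi, mul_neg_one]

lemma shift_ae {g₁ g₂ : UnitCircle → ℂ} (h : g₁ =ᵐ[hm] g₂) :
    (fun x => g₁ (x + ((Real.pi : ℝ) : UnitCircle))) =ᵐ[hm]
      fun x => g₂ (x + ((Real.pi : ℝ) : UnitCircle)) :=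
  (measurePreserving_add_right hm ((Real.pi : ℝ) : UnitCircle)).quasiMeasurePreserving.ae_eq h

lemma mul2_ae (φ1 φ2 : UnitCircle → ℂ) {g₁ g₂ : UnitCircle → ℂ} (h : g₁ =ᵐ[hm] g₂) :
    mul2 φ1 φ2 g₁ =ᵐ[hm] mul2 φ1 φ2 g₂ := by
  filter_upwards [h, shift_ae h] with x h1 h2
  simp only [mul2, evenPart, oddPart, h1, h2]

/-- If `C` is a conjugation intertwining `M_{z²}` and `M_{z̄²}`, so is
`M_z C M_{z̄}`, and if `C = M_{[ψ₁,ψ₂]} J` then `M_z C M_{z̄} = M_{[z²ψ₂, z²ψ₁]} J`. -/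
theorem stmt_17 (Mz Mzb Mz2 Mzb2 : L2T →L[ℂ] L2T)
    (hMz : ∀ f : L2T, (Mz f : UnitCircle → ℂ) =ᵐ[hm]
      fun x => zz x * (f : UnitCircle → ℂ) x)
    (hMzb : ∀ f : L2T, (Mzb f : UnitCircle → ℂ) =ᵐ[hm]
      fun x => (starRingEnd ℂ) (zz x) * (f : UnitCircle → ℂ) x)
    (hMz2 : ∀ f : L2T, (Mz2 f : UnitCircle → ℂ) =ᵐ[hm]
      fun x => zz x ^ 2 * (f : UnitCircle → ℂ) x)
    (hMzb2 : ∀ f : L2T, (Mzb2 f : UnitCircle → ℂ) =ᵐ[hm]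
      fun x => (starRingEnd ℂ) (zz x) ^ 2 * (f : UnitCircle → ℂ) x)
    (C : L2T → L2T) (hC : IsConjugation C)
    (hint : ∀ f, C (Mz2 f) = Mzb2 (C f)) :
    IsConjugation (fun f => Mz (C (Mzb f))) ∧
    (∀ f, Mz (C (Mzb (Mz2 f))) = Mzb2 (Mz (C (Mzb f)))) ∧
    ∀ ψ1 ψ2 : UnitCircle → ℂ,
      (∀ f : L2T, (C f : UnitCircle → ℂ) =ᵐ[hm]
        mul2 ψ1 ψ2 (fun y => (starRingEnd ℂ) ((f : UnitCircle → ℂ) y))) →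
      ∀ f : L2T, ((Mz (C (Mzb f)) : L2T) : UnitCircle → ℂ) =ᵐ[hm]
        mul2 (fun x => zz x ^ 2 * ψ2 x) (fun x => zz x ^ 2 * ψ1 x)
          (fun y => (starRingEnd ℂ) ((f : UnitCircle → ℂ) y)) := by
  -- operator identities
  have MzbMz : ∀ g : L2T, Mzb (Mz g) = g := by
    intro g
    apply Lp.ext
    filter_upwards [hMzb (Mz g), hMz g] with x h1 h2
    rw [h1, h2, ← mul_assoc, zconj, one_mul]
  have MzMzb : ∀ g : L2T, Mz (Mzb g) = g := by
    intro g
    apply Lp.ext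
    filter_upwards [hMz (Mzb g), hMzb g] with x h1 h2
    rw [h1, h2, ← mul_assoc, mul_comm (zz x), zconj, one_mul]
  have comm1 : ∀ g : L2T, Mzb (Mz2 g) = Mz2 (Mzb g) := by
    intro g
    apply Lp.ext
    filter_upwards [hMzb (Mz2 g), hMz2 g, hMz2 (Mzb g), hMzb g] with x h1 h2 h3 h4
    rw [h1, h2, h3, h4]; ring
  have comm2 : ∀ g : L2T, Mz (Mzb2 g) = Mzb2 (Mz g) := by
    intro g
    apply Lp.ext
    filter_upwards [hMz (Mzb2 g), hMzb2 g, hMzb2 (Mz g), hMz g] with x h1 h2 h3 h4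
    rw [h1, h2, h3, h4]; ring
  have Mz_inner : ∀ u v : L2T, (inner ℂ (Mz u) (Mz v) : ℂ) = inner ℂ u v := by
    intro u v
    rw [MeasureTheory.L2.inner_def, MeasureTheory.L2.inner_def]
    apply integral_congr_ae
    filter_upwards [hMz u, hMz v] with x h1 h2
    simp only [RCLike.inner_apply, h1, h2, map_mul]
    linear_combination (starRingEnd ℂ) ((u : UnitCircle → ℂ) x) * (v : UnitCircle → ℂ) x * zconj x
  have Mzb_inner : ∀ u v : L2T, (inner ℂ (Mzb u) (Mzb v) : ℂ) = inner ℂ u v := by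
    intro u v
    rw [MeasureTheory.L2.inner_def, MeasureTheory.L2.inner_def]
    apply integral_congr_ae
    filter_upwards [hMzb u, hMzb v] with x h1 h2
    simp only [RCLike.inner_apply, h1, h2, map_mul, Complex.conj_conj]
    linear_combination (starRingEnd ℂ) ((u : UnitCircle → ℂ) x) * (v : UnitCircle → ℂ) x * zconj x
  refine ⟨⟨?_, ?_, ?_, ?_⟩, ?_, ?_⟩
  · intro f g
    simp only [map_add, hC.map_add]
  · intro c f
    simp only [_root_.map_smul, hC.map_smul]
  · intro f
    simp only [MzbMz, hC.involutive, MzMzb]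
  · intro f g
    simp only [Mz_inner, hC.inner_eq, Mzb_inner]
  · intro f
    rw [comm1, hint, comm2]
  · intro ψ1 ψ2 hψ f
    have e1 : (fun y => (starRingEnd ℂ) ((Mzb f : UnitCircle → ℂ) y)) =ᵐ[hm]
        fun y => zz y * (starRingEnd ℂ) ((f : UnitCircle → ℂ) y) := by
      filter_upwards [hMzb f] with x hx
      rw [hx, map_mul, Complex.conj_conj]
    filter_upwards [hMz (C (Mzb f)), hψ (Mzb f), mul2_ae ψ1 ψ2 e1] with x h1 h2 h3
    rw [h1, h2, h3]
    simp only [mul2, evenPart, oddPart, zz_shift]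
    ring
end
end

section
/- There is no conjugation C on L²(𝕋) that intertwines M_{z²} and M_{\bar{z}²} and maps a Beurling-type subspace αH² into θH², for any inner functions α and θ. -/
open MeasureTheory Complex
open scoped Real

noncomputable section

section Aux

open scoped InnerProductSpace

/-- The Fourier basis vectors inside `L2T`. -/
def fE (n : ℤ) : L2T := fourierLp 2 n

lemma coeFn_fE (n : ℤ) : (fE n : UnitCircle → ℂ) =ᵐ[hm] fun x => fourier n x :=
  coeFn_fourierLp 2 n

lemma inner_fE (f : L2T) (n : ℤ) :
    (inner ℂ (fE n) f : ℂ) = fourierCoeff (f : UnitCircle → ℂ) n := by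
  rw [← fourierBasis_repr]
  rw [show (fE n : L2T) = fourierBasis n by rw [coe_fourierBasis]; rfl]
  exact (fourierBasis.repr_apply_apply f n).symm

lemma fE_mem_Hardy (n : ℕ) : fE (n : ℤ) ∈ Hardy :=
 by
  apply Submodule.le_topologicalClosure
  exact Submodule.subset_span ⟨n, rfl⟩

lemma inner_zero_of_hardy (v : L2T) (hv : ∀ n : ℕ, (inner ℂ v (fE (n : ℤ)) : ℂ) = 0)
    {f : L2T} (hf : f ∈ Hardy) : (inner ℂ v f : ℂ) = 0 := by
  have h1 : Hardy ≤ (ℂ ∙ v)ᗮ := by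
    unfold Hardy
    apply Submodule.topologicalClosure_minimal
    · rw [Submodule.span_le]
      rintro _ ⟨n, rfl⟩
      rw [SetLike.mem_coe, Submodule.mem_orthogonal_singleton_iff_inner_right]
      exact hv n
    · exact ((ℂ ∙ v) : Submodule ℂ L2T).isClosed_orthogonal
  exact Submodule.mem_orthogonal_singleton_iff_inner_right.mp (h1 hf)

lemma hardy_coeff {f : L2T} (hf : f ∈ Hardy) {m : ℤ} (hmneg : m < 0) :
    (inner ℂ (fE m) f : ℂ) = 0 := by
  refine inner_zero_of_hardy _ (fun n => ?_) hf
  exact orthonormal_fourier.2 (by omega)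

/-- The set defining `mulSub θ 1 S` is already a submodule. -/
def mulSet (θ : UnitCircle → ℂ) (S : Submodule ℂ L2T) : Submodule ℂ L2T where
  carrier := {g : L2T | ∃ f ∈ S, (g : UnitCircle → ℂ) =ᵐ[hm]
    fun x => θ x ^ (1 : ℤ) * (f : UnitCircle → ℂ) x}
  zero_mem' := ⟨0, S.zero_mem, by
    filter_upwards [Lp.coeFn_zero (E := ℂ) (p := 2) (μ := hm)] with x hx
    simp [hx]⟩
  add_mem' := by
    rintro g1 g2 ⟨f1, hf1, h1⟩ ⟨f2, hf2, h2⟩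
    refine ⟨f1 + f2, S.add_mem hf1 hf2, ?_⟩
    filter_upwards [h1, h2, Lp.coeFn_add g1 g2, Lp.coeFn_add f1 f2] with x e1 e2 e3 e4
    simp only [Pi.add_apply] at e3 e4
    rw [e3, e4, e1, e2]; ring
  smul_mem' := by
    rintro c g ⟨f, hf, h⟩
    refine ⟨c • f, S.smul_mem c hf, ?_⟩
    filter_upwards [h, Lp.coeFn_smul c g, Lp.coeFn_smul c f] with x e1 e2 e3
    simp only [Pi.smul_apply, smul_eq_mul] at e2 e3
    rw [e2, e3, e1]; ring

lemma mulSub_one_eq (θ : UnitCircle → ℂ) (S : Submodule ℂ L2T) :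
    mulSub θ 1 S = mulSet θ S := by
  refine le_antisymm (Submodule.span_le.2 fun g hg => hg) (fun g hg => Submodule.subset_span hg)

lemma inner_toLp (w : UnitCircle → ℂ) (hw : MemLp w 2 hm) (f : L2T) :
    (inner ℂ (hw.toLp w) f : ℂ)
      = ∫ x, (starRingEnd ℂ) (w x) * (f : UnitCircle → ℂ) x ∂hm := by
  rw [MeasureTheory.L2.inner_def]
  refine integral_congr_ae ?_
  filter_upwards [hw.coeFn_toLp] with x hx
  rw [RCLike.inner_apply, hx, mul_comm]

lemma norm_fourier_one (n : ℤ) (x : UnitCircle) : ‖fourier n x‖ = 1 := Circle.norm_coe _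

lemma memLp_conj_mul_fourier (θ : UnitCircle → ℂ) (hθ : MemLp θ 2 hm) (n : ℤ) :
    MemLp (fun x => (starRingEnd ℂ) (fourier n x * θ x)) 2 hm := by
  have hmeas : AEStronglyMeasurable (fun x => (starRingEnd ℂ) (fourier n x * θ x)) hm :=
    RCLike.continuous_conj.comp_aestronglyMeasurable
      ((fourier n).continuous.aestronglyMeasurable.mul hθ.1)
  refine hθ.of_le hmeas ?_
  filter_upwards with x
  rw [RCLike.norm_conj, norm_mul, norm_fourier_one, one_mul]

lemma mulSub_coeff_zero {θ : UnitCircle → ℂ} (hθ2 : MemLp θ 2 hm)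
    (hθH : hθ2.toLp θ ∈ Hardy) {g : L2T} (hg : g ∈ mulSub θ 1 Hardy)
    {m : ℤ} (hmneg : m < 0) : (inner ℂ (fE m) g : ℂ) = 0 := by
  rw [mulSub_one_eq] at hg
  obtain ⟨f, hfH, hgf⟩ := hg
  set w : UnitCircle → ℂ := fun x => (starRingEnd ℂ) (fourier (-m) x * θ x) with hw
  have hwmem : MemLp w 2 hm := memLp_conj_mul_fourier θ hθ2 (-m)
  have key : (inner ℂ (fE m) g : ℂ) = inner ℂ (hwmem.toLp w) f := by
    rw [inner_fE, inner_toLp]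
    unfold fourierCoeff
    refine integral_congr_ae ?_
    filter_upwards [hgf] with x hx
    rw [hx, hw]
    simp only [RingHomCompTriple.comp_apply, RingHom.id_apply, Complex.conj_conj, smul_eq_mul, zpow_one]
    ring
  rw [key]
  refine inner_zero_of_hardy _ (fun n => ?_) hfH
  have step : (inner ℂ (hwmem.toLp w) (fE (n : ℤ)) : ℂ) = inner ℂ (fE (m - n)) (hθ2.toLp θ) := by
    rw [inner_toLp, inner_fE]
    unfold fourierCoeff
    refine (integral_congr_ae ?_).symm
    filter_upwards [coeFn_fE (n : ℤ), hθ2.coeFn_toLp] with x h1 h2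
    rw [h1, h2, hw]
    simp only [RingHomCompTriple.comp_apply, RingHom.id_apply, Complex.conj_conj, smul_eq_mul]
    rw [show (-(m - n)) = n + -m by ring, fourier_add]
    ring
  rw [step]
  exact hardy_coeff hθH (by omega)

lemma coeff_shift_s18 (Mzb2 : L2T →L[ℂ] L2T)
    (hMzb2 : ∀ f : L2T, (Mzb2 f : UnitCircle → ℂ) =ᵐ[hm]
      fun x => (starRingEnd ℂ) (zz x) ^ 2 * (f : UnitCircle → ℂ) x)
    (g : L2T) (m : ℤ) : (inner ℂ (fE m) (Mzb2 g) : ℂ) = inner ℂ (fE (m + 2)) g := by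
  rw [inner_fE, inner_fE]
  unfold fourierCoeff
  refine integral_congr_ae ?_
  filter_upwards [hMzb2 g] with x hx
  rw [hx]
  simp only [zz, smul_eq_mul]
  rw [← fourier_neg (n := 1)]
  rw [show ((fourier (-1) x : ℂ)) ^ 2 = fourier (-1) x * fourier (-1) x from sq _,
    ← fourier_add, show (-1 + -1 : ℤ) = -2 by norm_num]
  rw [show (-(m + 2)) = (-m) + (-2) by ring, fourier_add]
  ring

lemma Mz2_fE (Mz2 : L2T →L[ℂ] L2T)
    (hMz2 : ∀ f : L2T, (Mz2 f : UnitCircle → ℂ) =ᵐ[hm]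
      fun x => zz x ^ 2 * (f : UnitCircle → ℂ) x)
    (n : ℤ) : Mz2 (fE n) = fE (n + 2) := by
  apply Lp.ext
  filter_upwards [hMz2 (fE n), coeFn_fE n, coeFn_fE (n + 2)] with x h1 h2 h3
  rw [h1, h3, h2]
  simp only [zz]
  rw [show ((fourier 1 x : ℂ)) ^ 2 = fourier 1 x * fourier 1 x from sq _,
    ← fourier_add, show (1 + 1 : ℤ) = 2 by norm_num, ← fourier_add,
    show (2 + n : ℤ) = n + 2 by ring]

lemma Mz2_Hardy (Mz2 : L2T →L[ℂ] L2T)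
    (hMz2 : ∀ f : L2T, (Mz2 f : UnitCircle → ℂ) =ᵐ[hm]
      fun x => zz x ^ 2 * (f : UnitCircle → ℂ) x)
    {f : L2T} (hf : f ∈ Hardy) : Mz2 f ∈ Hardy := by
  have hcl : IsClosed ((Hardy.comap (Mz2 : L2T →ₗ[ℂ] L2T) : Submodule ℂ L2T) : Set L2T) := by
    have h1 : IsClosed ((Hardy : Submodule ℂ L2T) : Set L2T) :=
      Submodule.isClosed_topologicalClosure _
    exact h1.preimage Mz2.continuous
  have hle : Hardy ≤ Hardy.comap (Mz2 : L2T →ₗ[ℂ] L2T) := by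
    conv_lhs => unfold Hardy
    apply Submodule.topologicalClosure_minimal
    · rw [Submodule.span_le]
      rintro _ ⟨n, rfl⟩
      rw [SetLike.mem_coe, Submodule.mem_comap]
      show Mz2 (fE (n : ℤ)) ∈ Hardy
      rw [Mz2_fE Mz2 hMz2]
      rw [show ((n : ℤ) + 2) = ((n + 2 : ℕ) : ℤ) by push_cast; ring]
      exact fE_mem_Hardy (n + 2)
    · exact hcl
  exact hle hf

lemma Mz2_mulSub (Mz2 : L2T →L[ℂ] L2T)
    (hMz2 : ∀ f : L2T, (Mz2 f : UnitCircle → ℂ) =ᵐ[hm]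
      fun x => zz x ^ 2 * (f : UnitCircle → ℂ) x)
    (αf : UnitCircle → ℂ) {g : L2T} (hg : g ∈ mulSub αf 1 Hardy) :
    Mz2 g ∈ mulSub αf 1 Hardy := by
  rw [mulSub_one_eq] at hg ⊢
  obtain ⟨f, hfH, hgf⟩ := hg
  refine ⟨Mz2 f, Mz2_Hardy Mz2 hMz2 hfH, ?_⟩
  filter_upwards [hMz2 g, hMz2 f, hgf] with x h1 h2 h3
  rw [h1, h2, h3]; ring

end Aux

/-- There is no conjugation intertwining `M_{z²}` and `M_{z̄²}` that maps a
Beurling-type subspace `αH²` into `θH²`, for any inner ℂ functions `α, θ`. -/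
theorem stmt_18 (α θ : UnitCircle → ℂ) (hα : IsInner α) (hθ : IsInner θ)
    (Mz2 Mzb2 : L2T →L[ℂ] L2T)
    (hMz2 : ∀ f : L2T, (Mz2 f : UnitCircle → ℂ) =ᵐ[hm]
      fun x => zz x ^ 2 * (f : UnitCircle → ℂ) x)
    (hMzb2 : ∀ f : L2T, (Mzb2 f : UnitCircle → ℂ) =ᵐ[hm]
      fun x => (starRingEnd ℂ) (zz x) ^ 2 * (f : UnitCircle → ℂ) x) :
    ¬ ∃ C : L2T → L2T, IsConjugation C ∧ (∀ f, C (Mz2 f) = Mzb2 (C f)) ∧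
      ∀ f ∈ mulSub α 1 Hardy, C f ∈ mulSub θ 1 Hardy := by
  rintro ⟨C, hC, hcomm, hmap⟩
  obtain ⟨hα2, hαabs, hαH⟩ := hα
  obtain ⟨hθ2, hθabs, hθH⟩ := hθ
  set αL := hα2.toLp α with hαLdef
  -- αL ∈ αH²
  have hα1 : αL ∈ mulSub α 1 Hardy := by
    rw [mulSub_one_eq]
    refine ⟨fE 0, by simpa using fE_mem_Hardy 0, ?_⟩
    filter_upwards [hα2.coeFn_toLp, coeFn_fE 0] with x h1 h2
    rw [h1, h2, fourier_zero]
    simp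
  -- iterate: elements of αH² mapping to Mzb2-iterates of C αL
  have hiter : ∀ n : ℕ, ∃ a : L2T, a ∈ mulSub α 1 Hardy ∧ C a = (⇑Mzb2)^[n] (C αL) := by
    intro n
    induction n with
    | zero => exact ⟨αL, hα1, rfl⟩
    | succ n ih =>
      obtain ⟨a, ha, hca⟩ := ih
      refine ⟨Mz2 a, Mz2_mulSub Mz2 hMz2 α ha, ?_⟩
      rw [Function.iterate_succ_apply', ← hca]
      exact hcomm a
  -- coefficient shift for iterates
  have hshift : ∀ (n : ℕ) (g : L2T) (m : ℤ),
      (inner ℂ (fE m) ((⇑Mzb2)^[n] g) : ℂ) = inner ℂ (fE (m + 2 * n)) g := by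
    intro n
    induction n with
    | zero => intro g m; simp
    | succ n ih =>
      intro g m
      rw [Function.iterate_succ_apply', coeff_shift_s18 Mzb2 hMzb2, ih,
        show m + 2 + 2 * (n : ℤ) = m + 2 * ((n + 1 : ℕ) : ℤ) by push_cast; ring]
  -- all Fourier coefficients of C αL vanish
  have hall : ∀ k : ℤ, (inner ℂ (fE k) (C αL) : ℂ) = 0 := by
    intro k
    obtain ⟨a, ha, hca⟩ := hiter (k.toNat + 1)
    have hmem : (⇑Mzb2)^[k.toNat + 1] (C αL) ∈ mulSub θ 1 Hardy := by
      rw [← hca]; exact hmap a ha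
    have hneg : k - 2 * ((k.toNat + 1 : ℕ) : ℤ) < 0 := by
      have := Int.self_le_toNat k; push_cast; omega
    have h1 := mulSub_coeff_zero hθ2 hθH hmem hneg
    have h2 := hshift (k.toNat + 1) (C αL) (k - 2 * ((k.toNat + 1 : ℕ) : ℤ))
    rw [show (k : ℤ) = k - 2 * ((k.toNat + 1 : ℕ) : ℤ) + 2 * ((k.toNat + 1 : ℕ) : ℤ) by ring,
      ← h2]
    exact h1
  -- hence C αL = 0
  have hb0 : C αL = 0 := by
    have hrep : (fourierBasis (T := 2 * Real.pi)).repr (C αL)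
        = (fourierBasis (T := 2 * Real.pi)).repr 0 := by
      rw [map_zero]
      ext k
      rw [fourierBasis_repr]
      have hk := hall k
      rw [inner_fE] at hk
      simpa using hk
    exact (fourierBasis (T := 2 * Real.pi)).repr.injective hrep
  -- hence αL = 0
  have hC0 : C (0 : L2T) = 0 := by
    have := hC.map_smul 0 0
    simpa using this
  have hαzero : αL = 0 := by
    have hinv := hC.involutive αL
    rw [hb0, hC0] at hinv
    exact hinv.symm
  -- contradiction with |α| = 1 a.e.
  have hbad : ∀ᵐ x ∂hm, False := by
    filter_upwards [hα2.coeFn_toLp, Lp.coeFn_zero (E := ℂ) (p := 2) (μ := hm), hαabs]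
      with x e1 e2 e3
    rw [← hαLdef, hαzero] at e1
    rw [e2] at e1
    simp only [Pi.zero_apply] at e1
    rw [← e1] at e3
    simp at e3
  haveI : (ae hm).NeBot := ae_neBot.2 (IsProbabilityMeasure.ne_zero hm)
  obtain ⟨x, hx⟩ := hbad.exists
  exact hx
end
end

section
/- There is no conjugation C on L²(𝕋) such that C M_{z^n} C = M_{\bar{z}^n} (i.e., M_{z^n} is C-symmetric) and C(H²) ⊆ H², for any n ≥ 1. -/
open MeasureTheory Complex
open scoped Real

noncomputable section

lemma fourier_pow_nat (m : ℕ) (x : UnitCircle) : zz x ^ m = fourier (m : ℤ) x := by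
  induction m with
  | zero => simp [fourier_zero]
  | succ k ih =>
    rw [pow_succ, ih, zz, ← fourier_add]
    push_cast
    ring_nf

lemma fourierLp_mem_hardy (k : ℕ) : (fourierLp 2 (k : ℤ) : L2T) ∈ Hardy :=
  Submodule.le_topologicalClosure _ (Submodule.subset_span ⟨k, rfl⟩)

/-- For `n ≥ 1`, there is no conjugation `C` making `M_{z^n}` `C`-symmetric
(`C M_{z^n} C = M_{z̄^n}`) with `C(H²) ⊆ H²`. -/
theorem stmt_19 (n : ℕ) (hn : 1 ≤ n) (Mzn Mznb : L2T →L[ℂ] L2T)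
    (hMzn : ∀ f : L2T, (Mzn f : UnitCircle → ℂ) =ᵐ[hm]
      fun x => zz x ^ n * (f : UnitCircle → ℂ) x)
    (hMznb : ∀ f : L2T, (Mznb f : UnitCircle → ℂ) =ᵐ[hm]
      fun x => (starRingEnd ℂ) (zz x) ^ n * (f : UnitCircle → ℂ) x) :
    ¬ ∃ C : L2T → L2T, IsConjugation C ∧ (∀ f, C (Mzn (C f)) = Mznb f) ∧
      ∀ f : L2T, f ∈ Hardy → C f ∈ Hardy := by
  rintro ⟨C, hC, hsym, hH⟩
  -- Mzn maps fourierLp k to fourierLp (k+n)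
  have key : ∀ k : ℕ, Mzn (fourierLp 2 (k : ℤ)) = fourierLp 2 ((k + n : ℕ) : ℤ) := by
    intro k
    apply Lp.ext (p := (2 : ENNReal)) (μ := hm)
    filter_upwards [hMzn (fourierLp 2 (k : ℤ)), coeFn_fourierLp 2 (k : ℤ),
      coeFn_fourierLp 2 ((k + n : ℕ) : ℤ)] with x h1 h2 h3
    rw [h1, h3]
    simp only [h2]
    rw [fourier_pow_nat n x, ← fourier_add]
    push_cast
    ring_nf
  -- Mzn maps Hardy into Hardy
  have hMznH : ∀ f : L2T, f ∈ Hardy → Mzn f ∈ Hardy := by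
    intro f hf
    have h1 : Mzn f ∈ (Hardy.map (Mzn : L2T →ₗ[ℂ] L2T)) :=
      Submodule.mem_map_of_mem hf
    have h2 : Hardy.map (Mzn : L2T →ₗ[ℂ] L2T) ≤ Hardy := by
      refine le_trans (Submodule.topologicalClosure_map Mzn _) ?_
      apply Submodule.topologicalClosure_mono
      rw [Submodule.map_span]
      apply Submodule.span_le.2
      rintro g ⟨g', ⟨k, rfl⟩, rfl⟩
      exact Submodule.subset_span ⟨k + n, (key k).symm⟩
    exact h2 h1
  -- hence Mznb (fourierLp 0) ∈ Hardy
  have h0 : (fourierLp 2 ((0 : ℕ) : ℤ) : L2T) ∈ Hardy := fourierLp_mem_hardy 0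
  have hmem : Mznb (fourierLp 2 ((0 : ℕ) : ℤ)) ∈ Hardy := by
    rw [← hsym]
    exact hH _ (hMznH _ (hH _ h0))
  -- Mznb (fourierLp 0) = fourierLp (-n)
  have heq : Mznb (fourierLp 2 ((0 : ℕ) : ℤ)) = fourierLp 2 (-(n : ℤ)) := by
    apply Lp.ext (p := (2 : ENNReal)) (μ := hm)
    filter_upwards [hMznb (fourierLp 2 ((0 : ℕ) : ℤ)), coeFn_fourierLp 2 ((0 : ℕ) : ℤ),
      coeFn_fourierLp 2 (-(n : ℤ))] with x h1 h2 h3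
    rw [h1, h3]
    simp only [h2]
    rw [Nat.cast_zero, fourier_zero, mul_one, ← map_pow, fourier_pow_nat n x, ← fourier_neg]
  rw [heq] at hmem
  -- but fourierLp (-n) is orthogonal to Hardy
  have horth : (fourierLp 2 (-(n : ℤ)) : L2T) ∈ Hardyᗮ := by
    have hsub : Hardy ≤ (ℂ ∙ (fourierLp 2 (-(n : ℤ)) : L2T))ᗮ := by
      apply Submodule.topologicalClosure_minimal
      · apply Submodule.span_le.2
        rintro g ⟨k, rfl⟩
        rw [SetLike.mem_coe, Submodule.mem_orthogonal_singleton_iff_inner_right]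
        have := orthonormal_fourier (T := 2 * Real.pi)
        rw [orthonormal_iff_ite] at this
        rw [this]
        have hne : ¬ (-(n : ℤ) = (k : ℤ)) := by omega
        simp [hne]
      · exact Submodule.isClosed_orthogonal _
    rw [Submodule.mem_orthogonal]
    intro u hu
    have := hsub hu
    rw [Submodule.mem_orthogonal_singleton_iff_inner_right] at this
    exact inner_eq_zero_symm.mp this
  have hzero : (fourierLp 2 (-(n : ℤ)) : L2T) = 0 := by
    have := Submodule.mem_orthogonal' Hardy _ |>.mp horth _ hmem
    simpa [inner_self_eq_zero] using this
  have hnorm := (orthonormal_fourier (T := 2 * Real.pi)).1 (-(n : ℤ))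
  rw [hzero] at hnorm
  simp at hnorm
end
end
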